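/- arXiv:1410.5477 — 8 statements merged into one kernel-verified Lean document; each statement's English description precedes it below -/
import Mathlib

section
/- Let x^{k+1} = prox_{α g}(x^k - α u^k) with u^k ∈ ∂f(x^k) and α > 0. Then for every x ∈ dom(g) and every w^k ∈ ∂g(x^k), one has ‖x^{k+1} - x‖² ≤ ‖x^k - x‖² + 2α[(f+g)(x) - (f+g)(x^k)] + α²‖u^k + w^k‖². -/
open Filter Metric Finset Bornology
open scoped RealInnerProductSpace Topology

/-- `w` is a subgradient of `h` at `x`, where `s` is the effective domain of `h`
(the extended-valued function equals `h` on `s` and `+∞` outside). -/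
def HasSubgradAt {H : Type*} [NormedAddCommGroup H] [InnerProductSpace ℝ H]
    (s : Set H) (h : H → ℝ) (w x : H) : Prop :=
  ∀ y ∈ s, h x + (inner ℝ w (y - x) : ℝ) ≤ h y

/-- `p` is the proximal point `prox_{αg}(z)`, i.e. a minimizer over the domain `s` of
`y ↦ g y + (1/(2α)) ‖y - z‖²`. -/
def IsProxPt {H : Type*} [NormedAddCommGroup H] [InnerProductSpace ℝ H]
    (s : Set H) (g : H → ℝ) (α : ℝ) (z p : H) : Prop :=
  p ∈ s ∧ ∀ y ∈ s, g p + (1/(2*α)) * ‖p - z‖^2 ≤ g y + (1/(2*α)) * ‖y - z‖^2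

/-- Solution set of `min (f+g)` over the domain `s` of `g`. -/
def SolSet {H : Type*} [NormedAddCommGroup H] (s : Set H) (f g : H → ℝ) : Set H :=
  {z ∈ s | ∀ y ∈ s, f z + g z ≤ f y + g y}

theorem pss_fundamental_one_step_inequality
    {H : Type*} [NormedAddCommGroup H] [InnerProductSpace ℝ H] [CompleteSpace H]
    (sf sg : Set H) (f g : H → ℝ)
    (hconvf : ConvexOn ℝ sf f) (hconvg : ConvexOn ℝ sg g)
    (hlscf : LowerSemicontinuousOn f sf) (hlscg : LowerSemicontinuousOn g sg)
    (hclg : IsClosed sg) (hdom : sg ⊆ sf) (hneg : sg.Nonempty)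
    (α : ℝ) (hα : 0 < α) (xk xk1 u w : H) (hxk : xk ∈ sg)
    (hu : HasSubgradAt sf f u xk) (hw : HasSubgradAt sg g w xk)
    (hstep : IsProxPt sg g α (xk - α • u) xk1) :
    ∀ xx ∈ sg,
      ‖xk1 - xx‖^2 ≤ ‖xk - xx‖^2 + 2*α*((f xx + g xx) - (f xk + g xk))
        + α^2 * ‖u + w‖^2 := by
  obtain ⟨hp, hmin⟩ := hstep
  intro xx hxx
  have hconvs : Convex ℝ sg := hconvg.1
  set z : H := xk - α • u with hz
  set N : ℝ := ‖xx - xk1‖^2 with hN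
  have hNnn : 0 ≤ N := by positivity
  -- key one-parameter inequality
  have key : ∀ t : ℝ, 0 < t → t ≤ 1 →
      0 ≤ (g xx - g xk1) + (1/α) * ⟪xk1 - z, xx - xk1⟫ + (1/(2*α)) * (t * N) := by
    intro t ht ht1
    have hmem : (1-t) • xk1 + t • xx ∈ sg :=
      hconvs hp hxx (by linarith) ht.le (by ring)
    have hg := hconvg.2 hp hxx (by linarith : (0:ℝ) ≤ 1 - t) ht.le (by ring)
    simp only [smul_eq_mul] at hg
    have heq : (1-t) • xk1 + t • xx = xk1 + t • (xx - xk1) := by module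
    rw [heq] at hmem hg
    have hm := hmin _ hmem
    have hexp : ‖xk1 + t • (xx - xk1) - z‖^2
        = ‖xk1 - z‖^2 + 2 * (t * ⟪xk1 - z, xx - xk1⟫) + t^2 * N := by
      have h1 : xk1 + t • (xx - xk1) - z = (xk1 - z) + t • (xx - xk1) := by abel
      rw [h1, norm_add_sq_real, real_inner_smul_right, norm_smul]
      simp only [Real.norm_eq_abs]
      rw [mul_pow, sq_abs]
      all_goals ring
    rw [hexp] at hm
    have hαinv : 0 < 1/(2*α) := by positivity
    have htX : 0 ≤ t * ((g xx - g xk1) + (1/α) * ⟪xk1 - z, xx - xk1⟫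
        + (1/(2*α)) * (t * N)) := by
      have e : t * ((g xx - g xk1) + (1/α) * ⟪xk1 - z, xx - xk1⟫
          + (1/(2*α)) * (t * N))
          = (g (xk1 + t • (xx - xk1)) + (1/(2*α)) * ‖xk1 + t • (xx - xk1) - z‖^2
            - (g xk1 + (1/(2*α)) * ‖xk1 - z‖^2))
          + ((1-t) * g xk1 + t * g xx - g (xk1 + t • (xx - xk1))) := by
        rw [hexp]
        field_simp
        ring
      rw [e, hexp]
      have := sub_nonneg.mpr hm
      have := sub_nonneg.mpr hg
      linarith
    nlinarith [htX, ht]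
  -- limit t → 0⁺ : drop the quadratic term
  have hA : 0 ≤ (g xx - g xk1) + (1/α) * ⟪xk1 - z, xx - xk1⟫ := by
    set A : ℝ := (g xx - g xk1) + (1/α) * ⟪xk1 - z, xx - xk1⟫ with hAdef
    refine le_of_forall_pos_le_add ?_
    intro ε hε
    have hc : 0 < 1/(2*α) := by positivity
    set t : ℝ := min 1 (ε / ((1/(2*α)) * N + 1)) with htdef
    have hden : 0 < (1/(2*α)) * N + 1 := by positivity
    have ht0 : 0 < t := lt_min one_pos (div_pos hε hden)
    have ht1 : t ≤ 1 := min_le_left _ _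
    have hkey := key t ht0 ht1
    have hsmall : (1/(2*α)) * (t * N) ≤ ε := by
      have ht2 : t ≤ ε / ((1/(2*α)) * N + 1) := min_le_right _ _
      have h1 : (1/(2*α)) * (t * N) ≤ (1/(2*α)) * N * (ε / ((1/(2*α)) * N + 1)) := by
        have := mul_le_mul_of_nonneg_left ht2 (by positivity : (0:ℝ) ≤ (1/(2*α)) * N)
        nlinarith
      have h2 : (1/(2*α)) * N * (ε / ((1/(2*α)) * N + 1)) ≤ ε := by
        have hfrac : ((1/(2*α)) * N) / ((1/(2*α)) * N + 1) ≤ 1 := by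
          rw [div_le_one hden]; linarith
        calc (1/(2*α)) * N * (ε / ((1/(2*α)) * N + 1))
            = ε * (((1/(2*α)) * N) / ((1/(2*α)) * N + 1)) := by ring
          _ ≤ ε * 1 := mul_le_mul_of_nonneg_left hfrac hε.le
          _ = ε := mul_one ε
      linarith
    clear_value t A
    linarith
  -- variational inequality
  have VI : α * (g xk1 - g xx) ≤ ⟪xk1 - z, xx - xk1⟫ := by
    have := mul_le_mul_of_nonneg_left hA hα.le
    have hαα : α * ((1/α) * ⟪xk1 - z, xx - xk1⟫) = ⟪xk1 - z, xx - xk1⟫ := by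
      field_simp
    nlinarith [this]
  -- abbreviations
  set a : H := xk1 - xk with ha
  set b : H := xx - xk1 with hb
  -- expand the inner product in VI
  have hVIexp : ⟪xk1 - z, xx - xk1⟫ = ⟪a, b⟫ + α * ⟪u, b⟫ := by
    have : xk1 - z = a + α • u := by rw [hz, ha]; abel
    rw [this, inner_add_left, real_inner_smul_left, hb]
  -- subgradient inequalities
  have F2 : f xk + ⟪u, a⟫ + ⟪u, b⟫ ≤ f xx := by
    have := hu xx (hdom hxx)
    have hab : xx - xk = a + b := by rw [ha, hb]; abel
    rw [hab, inner_add_right] at this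
    linarith
  have F3 : g xk + ⟪w, a⟫ ≤ g xk1 := by
    have := hw xk1 hp
    rw [show xk1 - xk = a from rfl] at this
    linarith
  -- norm identity
  have E1 : ‖xk - xx‖^2 = ‖a‖^2 + 2 * ⟪a, b⟫ + ‖xk1 - xx‖^2 := by
    have h1 : xk - xx = -(a + b) := by rw [ha, hb]; abel
    have h2 : ‖xk1 - xx‖ = ‖b‖ := by rw [hb, norm_sub_rev]
    rw [h1, norm_neg, norm_add_sq_real, h2]
    all_goals ring
  -- completing the square
  have E2 : 0 ≤ ‖a‖^2 + 2 * α * (⟪u, a⟫ + ⟪w, a⟫) + α^2 * ‖u + w‖^2 := by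
    have h1 : ‖a + α • (u + w)‖^2
        = ‖a‖^2 + 2 * α * (⟪u, a⟫ + ⟪w, a⟫) + α^2 * ‖u + w‖^2 := by
      rw [norm_add_sq_real, real_inner_smul_right, norm_smul, inner_add_right]
      simp only [Real.norm_eq_abs]
      rw [mul_pow, sq_abs, real_inner_comm a u, real_inner_comm a w]
      all_goals ring
    rw [← h1]; positivity
  rw [hVIexp] at VI
  -- scaled subgradient inequalities
  have F2' : 2 * α * (f xk + ⟪u, a⟫ + ⟪u, b⟫) ≤ 2 * α * f xx :=
    mul_le_mul_of_nonneg_left F2 (by positivity)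
  have F3' : 2 * α * (g xk + ⟪w, a⟫) ≤ 2 * α * g xk1 :=
    mul_le_mul_of_nonneg_left F3 (by positivity)
  have VI' : 2 * (α * (g xk1 - g xx)) ≤ 2 * (⟪a, b⟫ + α * ⟪u, b⟫) :=
    mul_le_mul_of_nonneg_left VI (by norm_num)
  rw [E1]
  nlinarith [E2, F2', F3', VI']
end

section
/- Let (x^k) be generated by the proximal subgradient splitting iteration x^{k+1} = prox_{α_k g}(x^k - α_k u^k), u^k ∈ ∂f(x^k), with α_k > 0. If the solution set S* of min (f+g) is nonempty and x* is the projection of x^0 onto S*, then for all k, the best value (f+g)^k_best := min_{0≤i≤k} (f+g)(x^i) satisfies (f+g)^k_best - min(f+g) ≤ (dist(x^0, S*)² + C_k · Σ_{i=0}^k α_i²) / (2 Σ_{i=0}^k α_i), where C_k := max_{0≤i≤k} ‖u^i + w^i‖² for any choices w^i ∈ ∂g(x^i). -/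
open Filter Metric Finset Bornology
open scoped RealInnerProductSpace Topology

lemma aux_limit {A B : ℝ} (hB : 0 ≤ B) (h : ∀ t : ℝ, 0 < t → t ≤ 1 → 0 ≤ A + t * B) :
    0 ≤ A := by
  by_contra hc
  push_neg at hc
  have ht0 : 0 < min 1 ((-A)/(2*(B+1))) :=
    lt_min one_pos (div_pos (by linarith) (by linarith))
  have h2 := h _ ht0 (min_le_left _ _)
  have h3 : min 1 ((-A)/(2*(B+1))) * B ≤ (-A)/2 := by
    calc min 1 ((-A)/(2*(B+1))) * B ≤ ((-A)/(2*(B+1))) * B :=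
          mul_le_mul_of_nonneg_right (min_le_right _ _) hB
    _ ≤ (-A)/2 := by
        rw [div_mul_eq_mul_div, div_le_div_iff₀ (by linarith) (by norm_num)]
        nlinarith
  linarith

lemma prox_var_ineq {H : Type*} [NormedAddCommGroup H] [InnerProductSpace ℝ H]
    {s : Set H} {g : H → ℝ} (hg : ConvexOn ℝ s g) {α : ℝ} (hα : 0 < α)
    {z p : H} (hp : IsProxPt s g α z p) :
    ∀ y ∈ s, g p + (1/α) * ⟪z - p, y - p⟫ ≤ g y := by
  intro y hy
  have key : ∀ t : ℝ, 0 < t → t ≤ 1 →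
      0 ≤ (g y - g p + (1/α) * ⟪p - z, y - p⟫) + t * ((1/(2*α)) * ‖y - p‖^2) := by
    intro t ht ht1
    have hyt : p + t • (y - p) ∈ s := by
      have := hg.1 hp.1 hy (by linarith : (0:ℝ) ≤ 1 - t) ht.le (by ring)
      convert this using 1
      module
    have h1 := hp.2 _ hyt
    have h2 : g (p + t • (y - p)) ≤ (1-t) * g p + t * g y := by
      have := hg.2 hp.1 hy (by linarith : (0:ℝ) ≤ 1 - t) ht.le (by ring)
      have e : p + t • (y - p) = (1 - t) • p + t • y := by module
      rw [e]; exact this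
    have h3 : ‖p + t • (y - p) - z‖^2
        = ‖p - z‖^2 + 2 * (t * ⟪p - z, y - p⟫) + t^2 * ‖y - p‖^2 := by
      have e : p + t • (y - p) - z = (p - z) + t • (y - p) := by module
      rw [e, norm_add_sq_real, real_inner_smul_right, norm_smul, mul_pow, Real.norm_eq_abs,
        sq_abs]
    rw [h3] at h1
    have hα' : (0:ℝ) < 1/(2*α) := by positivity
    have h4 : 0 ≤ t * (g y - g p) + (1/(2*α)) * (2 * (t * ⟪p - z, y - p⟫) + t^2 * ‖y - p‖^2) := by
      nlinarith [h1, h2]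
    have h5 := mul_le_mul_of_nonneg_left h4 (le_of_lt (by positivity : (0:ℝ) < 1/t))
    calc (0:ℝ) = (1/t) * 0 := by ring
    _ ≤ (1/t) * (t * (g y - g p) + (1/(2*α)) * (2 * (t * ⟪p - z, y - p⟫) + t^2 * ‖y - p‖^2)) := h5
    _ = (g y - g p + (1/α) * ⟪p - z, y - p⟫) + t * ((1/(2*α)) * ‖y - p‖^2) := by
        field_simp
        ring
  have h0 := aux_limit (by positivity) key
  have hne : ⟪z - p, y - p⟫ = -⟪p - z, y - p⟫ := by
    rw [show z - p = -(p - z) by abel, inner_neg_left]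
  rw [hne]
  nlinarith [h0]

lemma pss_one_step {H : Type*} [NormedAddCommGroup H] [InnerProductSpace ℝ H]
    {sf sg : Set H} {f g : H → ℝ} (hdom : sg ⊆ sf)
    {a : ℝ} (ha : 0 < a) {xx p uu ww z : H}
    (hz : z ∈ sg) (hpmem : p ∈ sg)
    (hpv : ∀ y ∈ sg, g p + (1/a) * ⟪(xx - a • uu) - p, y - p⟫ ≤ g y)
    (huu : HasSubgradAt sf f uu xx) (hww : HasSubgradAt sg g ww xx) :
    ‖p - z‖^2 ≤ ‖xx - z‖^2 + 2*a*((f z + g z) - (f xx + g xx)) + a^2 * ‖uu + ww‖^2 := by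
  set A := xx - z with hAdef
  set d := p - xx with hddef
  have h1 : ⟪d, A⟫ + ‖d‖^2 + a*⟪uu, A⟫ + a*⟪uu, d⟫ ≤ a * (g z - g p) := by
    have := hpv z hz
    have hid : ⟪(xx - a • uu) - p, z - p⟫ = ⟪d, A⟫ + ‖d‖^2 + a*⟪uu, A⟫ + a*⟪uu, d⟫ := by
      have e1 : (xx - a • uu) - p = -(d + a • uu) := by module
      have e2 : z - p = -(A + d) := by module
      rw [e1, e2, inner_neg_neg, inner_add_left, inner_add_right, inner_add_right,
        real_inner_smul_left, real_inner_smul_left, real_inner_self_eq_norm_sq]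
      ring
    rw [hid] at this
    have h' := mul_le_mul_of_nonneg_left this ha.le
    rw [mul_add, ← mul_assoc, mul_one_div, div_self ha.ne', one_mul] at h'
    linarith [h']
  have h2 : f xx - ⟪uu, A⟫ ≤ f z := by
    have := huu z (hdom hz)
    have e : ⟪uu, z - xx⟫ = -⟪uu, A⟫ := by
      rw [show z - xx = -A by module, inner_neg_right]
    rw [e] at this; linarith
  have h3 : g xx + ⟪ww, d⟫ ≤ g p := hww p hpmem
  have h4 : 0 ≤ ‖d‖^2 + 2*a*⟪uu, d⟫ + 2*a*⟪ww, d⟫ + a^2 * ‖uu + ww‖^2 := by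
    have := sq_nonneg (‖d + a • (uu + ww)‖)
    rw [norm_add_sq_real, real_inner_smul_right, norm_smul, mul_pow, Real.norm_eq_abs,
      sq_abs, inner_add_right] at this
    rw [real_inner_comm uu d, real_inner_comm ww d] at this
    linarith
  have hexp : ‖p - z‖^2 = ‖A‖^2 + 2*⟪d, A⟫ + ‖d‖^2 := by
    rw [show p - z = A + d by module, norm_add_sq_real, real_inner_comm A d]
  have h2' := mul_le_mul_of_nonneg_left h2 ha.le
  have h3' := mul_le_mul_of_nonneg_left h3 ha.le
  rw [hexp]
  nlinarith [h1, h2', h3', h4]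

theorem pss_best_value_complexity
    {H : Type*} [NormedAddCommGroup H] [InnerProductSpace ℝ H] [CompleteSpace H]
    (sf sg : Set H) (f g : H → ℝ)
    (hconvf : ConvexOn ℝ sf f) (hconvg : ConvexOn ℝ sg g)
    (hlscf : LowerSemicontinuousOn f sf) (hlscg : LowerSemicontinuousOn g sg)
    (hclg : IsClosed sg) (hdom : sg ⊆ sf) (hneg : sg.Nonempty)
    (x u w : ℕ → H) (α : ℕ → ℝ) (hα : ∀ k, 0 < α k) (hx0 : x 0 ∈ sg)
    (hu : ∀ k, HasSubgradAt sf f (u k) (x k))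
    (hw : ∀ k, HasSubgradAt sg g (w k) (x k))
    (hstep : ∀ k, IsProxPt sg g (α k) (x k - α k • u k) (x (k+1)))
    (xstar : H) (hstar : xstar ∈ SolSet sg f g) (k : ℕ) :
    (Finset.range (k+1)).inf' (by simp) (fun i => f (x i) + g (x i))
        - (f xstar + g xstar)
      ≤ ((Metric.infDist (x 0) (SolSet sg f g))^2
          + ((Finset.range (k+1)).sup' (by simp) (fun i => ‖u i + w i‖^2))
              * ∑ i ∈ Finset.range (k+1), (α i)^2)
        / (2 * ∑ i ∈ Finset.range (k+1), α i) := by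
  -- membership of all iterates
  have hmem : ∀ i, x i ∈ sg := by
    intro i
    cases i with
    | zero => exact hx0
    | succ n => exact (hstep n).1
  -- one-step estimate for each i and each z ∈ sg
  have hone : ∀ (i : ℕ), ∀ z ∈ sg,
      ‖x (i+1) - z‖^2 ≤ ‖x i - z‖^2
        + 2*(α i)*((f z + g z) - (f (x i) + g (x i))) + (α i)^2 * ‖u i + w i‖^2 := by
    intro i z hz
    exact pss_one_step hdom (hα i) hz (hmem (i+1))
      (prox_var_ineq hconvg (hα i) (hstep i)) (hu i) (hw i)
  -- telescoped estimate
  have htel : ∀ (n : ℕ), ∀ z ∈ sg,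
      ‖x (n+1) - z‖^2
        + ∑ i ∈ Finset.range (n+1), 2*(α i)*((f (x i) + g (x i)) - (f z + g z))
      ≤ ‖x 0 - z‖^2 + ∑ i ∈ Finset.range (n+1), (α i)^2 * ‖u i + w i‖^2 := by
    intro n
    induction n with
    | zero =>
        intro z hz
        rw [Finset.sum_range_one, Finset.sum_range_one]
        have := hone 0 z hz
        linarith
    | succ m ih =>
        intro z hz
        have h1 := ih z hz
        have h2 := hone (m+1) z hz
        rw [Finset.sum_range_succ, Finset.sum_range_succ (fun i => (α i)^2 * ‖u i + w i‖^2)]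
        linarith
  set S := SolSet sg f g with hS
  set M := f xstar + g xstar with hM
  set best := (Finset.range (k+1)).inf' (by simp) (fun i => f (x i) + g (x i)) with hbest
  set C := (Finset.range (k+1)).sup' (by simp) (fun i => ‖u i + w i‖^2) with hC
  set Sα := ∑ i ∈ Finset.range (k+1), α i with hSα
  set SA := ∑ i ∈ Finset.range (k+1), (α i)^2 with hSA
  have hSαpos : 0 < Sα := Finset.sum_pos (fun i _ => hα i) (by simp)
  have hCnonneg : (0:ℝ) ≤ C := by
    refine le_trans (sq_nonneg ‖u 0 + w 0‖) ?_
    exact Finset.le_sup' (fun i => ‖u i + w i‖^2) (by simp : 0 ∈ Finset.range (k+1))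
  -- key bound for every z ∈ S
  have hkey : ∀ z ∈ S, (best - M) * (2 * Sα) - C * SA ≤ dist (x 0) z ^ 2 := by
    intro z hzS
    have hzsg : z ∈ sg := hzS.1
    have hzM : f z + g z = M := le_antisymm (hzS.2 xstar hstar.1) (hstar.2 z hzsg)
    have h1 := htel k z hzsg
    have h2 : ∑ i ∈ Finset.range (k+1), (α i)^2 * ‖u i + w i‖^2 ≤ C * SA := by
      rw [hSA, Finset.mul_sum]
      apply Finset.sum_le_sum
      intro i hi
      rw [mul_comm C ((α i)^2)]
      exact mul_le_mul_of_nonneg_left (Finset.le_sup' (fun j => ‖u j + w j‖^2) hi) (sq_nonneg _)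
    have h3 : (best - M) * (2 * Sα)
        ≤ ∑ i ∈ Finset.range (k+1), 2*(α i)*((f (x i) + g (x i)) - (f z + g z)) := by
      rw [hzM]
      have : (best - M) * (2 * Sα) = ∑ i ∈ Finset.range (k+1), 2*(α i)*(best - M) := by
        rw [hSα, Finset.mul_sum, Finset.mul_sum]
        exact Finset.sum_congr rfl (fun i _ => by ring)
      rw [this]
      apply Finset.sum_le_sum
      intro i hi
      have hle : best ≤ f (x i) + g (x i) := Finset.inf'_le _ hi
      have : (0:ℝ) ≤ 2 * α i := by linarith [hα i]
      nlinarith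
    have h4 : (0:ℝ) ≤ ‖x (k+1) - z‖^2 := sq_nonneg _
    rw [dist_eq_norm]
    linarith
  -- pass to the infimum
  have hSne : S.Nonempty := ⟨xstar, hstar⟩
  have hinf : (best - M) * (2 * Sα) - C * SA ≤ (Metric.infDist (x 0) S)^2 := by
    set K := (best - M) * (2 * Sα) - C * SA with hK
    rcases le_or_gt K 0 with hK0 | hK0
    · exact le_trans hK0 (sq_nonneg _)
    · have hsqrt : Real.sqrt K ≤ Metric.infDist (x 0) S := by
        by_contra hlt
        push_neg at hlt
        obtain ⟨z, hz, hdz⟩ := (Metric.infDist_lt_iff hSne).1 hlt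
        have hk := hkey z hz
        have hd : 0 ≤ dist (x 0) z := dist_nonneg
        have hsk : Real.sqrt K ≤ dist (x 0) z := by
          calc Real.sqrt K ≤ Real.sqrt (dist (x 0) z ^ 2) := Real.sqrt_le_sqrt hk
          _ = dist (x 0) z := by rw [Real.sqrt_sq hd]
        linarith
      calc K = (Real.sqrt K)^2 := (Real.sq_sqrt hK0.le).symm
      _ ≤ (Metric.infDist (x 0) S)^2 :=
          pow_le_pow_left₀ (Real.sqrt_nonneg K) hsqrt 2
  rw [le_div_iff₀ (by linarith)]
  linarith [hinf]
end

section
/- Under the same iteration, the ergodic average x̄^k := (Σ_{i=0}^k α_i x^i)/(Σ_{i=0}^k α_i) satisfies (f+g)(x̄^k) - min(f+g) ≤ (dist(x^0, S*)² + C_k Σ_{i=0}^k α_i²)/(2 Σ_{i=0}^k α_i), where C_k := max_{0≤i≤k} ‖u^i + w^i‖² with arbitrary w^i ∈ ∂g(x^i). -/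
open Filter Metric Finset Bornology
open scoped RealInnerProductSpace Topology

private lemma pss_lim_aux {a c : ℝ} (hc : 0 ≤ c)
    (h : ∀ t : ℝ, 0 < t → t ≤ 1 → a ≤ t * c) : a ≤ 0 := by
  by_contra hap
  push_neg at hap
  rcases eq_or_lt_of_le hc with hc0 | hc0
  · have := h 1 one_pos le_rfl; nlinarith
  · have ht : 0 < min 1 (a / (2 * c)) := lt_min one_pos (by positivity)
    have h1 := h _ ht (min_le_left _ _)
    have h2 : min 1 (a / (2 * c)) * c ≤ (a / (2 * c)) * c :=
      mul_le_mul_of_nonneg_right (min_le_right _ _) hc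
    have h3 : (a / (2 * c)) * c = a / 2 := by field_simp
    linarith

private lemma pss_comb_norm {H : Type*} [NormedAddCommGroup H] [InnerProductSpace ℝ H]
    (a b : H) {t : ℝ} (h0 : 0 ≤ t) (h1 : t ≤ 1) :
    ‖(1 - t) • a + t • b‖ ^ 2
      = (1 - t) * ‖a‖ ^ 2 + t * ‖b‖ ^ 2 - t * (1 - t) * ‖a - b‖ ^ 2 := by
  have h1t : ‖(1:ℝ) - t‖ = 1 - t := by rw [Real.norm_eq_abs, abs_of_nonneg (by linarith)]
  have h2t : ‖t‖ = t := by rw [Real.norm_eq_abs, abs_of_nonneg h0]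
  rw [norm_add_sq_real, norm_sub_sq_real, norm_smul, norm_smul, real_inner_smul_left,
    real_inner_smul_right, h1t, h2t]
  ring

/-- Strong (three-point) property of the proximal point, derived from convexity. -/
private lemma pss_strong_prox {H : Type*} [NormedAddCommGroup H] [InnerProductSpace ℝ H]
    {s : Set H} {g : H → ℝ} (hconv : ConvexOn ℝ s g) {α : ℝ} (hα : 0 < α)
    {q p : H} (hp : IsProxPt s g α q p) {y : H} (hy : y ∈ s) :
    g p + (1/(2*α)) * ‖p - q‖^2 + (1/(2*α)) * ‖p - y‖^2
      ≤ g y + (1/(2*α)) * ‖y - q‖^2 := by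
  set c : ℝ := 1/(2*α) with hc
  have hcpos : 0 < c := by positivity
  have hps := hp.1
  have key : ∀ t : ℝ, 0 < t → t ≤ 1 →
      (g p + c * ‖p - q‖^2 + c * ‖p - y‖^2) - (g y + c * ‖y - q‖^2)
        ≤ t * (c * ‖p - y‖^2) := by
    intro t ht0 ht1
    have hmem : (1 - t) • p + t • y ∈ s :=
      hconv.1 hps hy (by linarith) ht0.le (by ring)
    have hgc : g ((1 - t) • p + t • y) ≤ (1 - t) * g p + t * g y :=
      hconv.2 hps hy (by linarith) ht0.le (by ring)
    have hprox := hp.2 _ hmem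
    have hsplit : ((1 - t) • p + t • y) - q = (1 - t) • (p - q) + t • (y - q) := by
      rw [smul_sub, smul_sub]
      have hq : (1 - t) • q + t • q = q := by
        rw [← add_smul]; norm_num
      rw [sub_eq_iff_eq_add]
      rw [show (1 - t) • p - (1 - t) • q + (t • y - t • q) + q
            = (1 - t) • p + t • y - ((1 - t) • q + t • q) + q by abel, hq]
      abel
    have hnorm : ‖((1 - t) • p + t • y) - q‖^2
        = (1 - t) * ‖p - q‖^2 + t * ‖y - q‖^2 - t * (1 - t) * ‖p - y‖^2 := by
      rw [hsplit, pss_comb_norm _ _ ht0.le ht1, show (p - q) - (y - q) = p - y by abel]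
    rw [hnorm] at hprox
    nlinarith [hprox, hgc, ht0, hcpos]
  have hfin := pss_lim_aux (by positivity) key
  linarith

/-- One-step descent inequality of the proximal subgradient method. -/
private lemma pss_step {H : Type*} [NormedAddCommGroup H] [InnerProductSpace ℝ H]
    {sf sg : Set H} {f g : H → ℝ} (hconvg : ConvexOn ℝ sg g) (hdom : sg ⊆ sf)
    {α : ℝ} (hα : 0 < α) {a p ui wi : H}
    (hu : HasSubgradAt sf f ui a) (hw : HasSubgradAt sg g wi a)
    (hp : IsProxPt sg g α (a - α • ui) p) {z : H} (hz : z ∈ sg) :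
    ‖p - z‖^2 ≤ ‖a - z‖^2 - 2*α*((f a + g a) - (f z + g z)) + α^2 * ‖ui + wi‖^2 := by
  have sp := pss_strong_prox hconvg hα hp hz
  have sp2 : 2*α*(g p) + ‖p - (a - α • ui)‖^2 + ‖p - z‖^2
      ≤ 2*α*(g z) + ‖z - (a - α • ui)‖^2 := by
    have h := mul_le_mul_of_nonneg_left sp (by positivity : (0:ℝ) ≤ 2*α)
    simp only [mul_add, ← mul_assoc] at h ⊢
    have e' : ∀ X : ℝ, 2*α*(1/(2*α))*X = X := fun X => by field_simp
    simp only [e'] at h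
    linarith
  have hq1 : p - (a - α • ui) = (p - a) + α • ui := by abel
  have hq2 : z - (a - α • ui) = (z - a) + α • ui := by abel
  have hA : ‖p - (a - α • ui)‖^2
      = ‖p - a‖^2 + 2*(α*⟪p - a, ui⟫) + α^2*‖ui‖^2 := by
    rw [hq1, norm_add_sq_real, real_inner_smul_right, norm_smul, Real.norm_eq_abs,
      mul_pow, sq_abs]
  have hB : ‖z - (a - α • ui)‖^2
      = ‖z - a‖^2 + 2*(α*⟪z - a, ui⟫) + α^2*‖ui‖^2 := by
    rw [hq2, norm_add_sq_real, real_inner_smul_right, norm_smul, Real.norm_eq_abs,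
      mul_pow, sq_abs]
  have hY : ‖α • (ui + wi) + (p - a)‖^2
      = α^2*‖ui + wi‖^2 + 2*(α*⟪ui + wi, p - a⟫) + ‖p - a‖^2 := by
    rw [norm_add_sq_real, real_inner_smul_left, norm_smul, Real.norm_eq_abs,
      mul_pow, sq_abs]
  have hY0 : (0:ℝ) ≤ ‖α • (ui + wi) + (p - a)‖^2 := by positivity
  have hf' : f a + ⟪ui, z - a⟫ ≤ f z := hu z (hdom hz)
  have hg' : g a + ⟪wi, p - a⟫ ≤ g p := hw p hp.1
  have hf2 : 2*α*(f a + ⟪ui, z - a⟫) ≤ 2*α*(f z) :=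
    mul_le_mul_of_nonneg_left hf' (by positivity)
  have hg2 : 2*α*(g a + ⟪wi, p - a⟫) ≤ 2*α*(g p) :=
    mul_le_mul_of_nonneg_left hg' (by positivity)
  have e1 : ⟪ui + wi, p - a⟫ = ⟪ui, p - a⟫ + ⟪wi, p - a⟫ := inner_add_left _ _ _
  have e2 : ⟪ui, z - a⟫ = ⟪z - a, ui⟫ := real_inner_comm _ _
  have e3 : ⟪ui, p - a⟫ = ⟪p - a, ui⟫ := real_inner_comm _ _
  have e4 : ‖z - a‖ = ‖a - z‖ := norm_sub_rev _ _
  rw [hA, hB] at sp2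
  rw [hY] at hY0
  rw [e4] at sp2
  nlinarith [sp2, hY0, hf2, hg2, e1, e2, e3]

theorem pss_ergodic_complexity
    {H : Type*} [NormedAddCommGroup H] [InnerProductSpace ℝ H] [CompleteSpace H]
    (sf sg : Set H) (f g : H → ℝ)
    (hconvf : ConvexOn ℝ sf f) (hconvg : ConvexOn ℝ sg g)
    (hlscf : LowerSemicontinuousOn f sf) (hlscg : LowerSemicontinuousOn g sg)
    (hclg : IsClosed sg) (hdom : sg ⊆ sf) (hneg : sg.Nonempty)
    (x u w : ℕ → H) (α : ℕ → ℝ) (hα : ∀ k, 0 < α k) (hx0 : x 0 ∈ sg)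
    (hu : ∀ k, HasSubgradAt sf f (u k) (x k))
    (hw : ∀ k, HasSubgradAt sg g (w k) (x k))
    (hstep : ∀ k, IsProxPt sg g (α k) (x k - α k • u k) (x (k+1)))
    (xstar : H) (hstar : xstar ∈ SolSet sg f g) (k : ℕ) :
    (f ((∑ i ∈ Finset.range (k+1), α i)⁻¹ • ∑ i ∈ Finset.range (k+1), α i • x i)
      + g ((∑ i ∈ Finset.range (k+1), α i)⁻¹ • ∑ i ∈ Finset.range (k+1), α i • x i))
        - (f xstar + g xstar)
      ≤ ((Metric.infDist (x 0) (SolSet sg f g))^2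
          + ((Finset.range (k+1)).sup' (by simp) (fun i => ‖u i + w i‖^2))
              * ∑ i ∈ Finset.range (k+1), (α i)^2)
        / (2 * ∑ i ∈ Finset.range (k+1), α i) := by
  classical
  set S : ℝ := ∑ i ∈ Finset.range (k+1), α i with hSdef
  set Q : ℝ := ∑ i ∈ Finset.range (k+1), (α i)^2 with hQdef
  set C : ℝ := (Finset.range (k+1)).sup' (by simp) (fun i => ‖u i + w i‖^2) with hCdef
  have hS : 0 < S := Finset.sum_pos (fun i _ => hα i) (by simp)
  have hC : ∀ i ∈ Finset.range (k+1), ‖u i + w i‖^2 ≤ C :=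
    fun i hi => by rw [hCdef]; exact Finset.le_sup' (fun j => ‖u j + w j‖^2) hi
  have hxmem : ∀ i, x i ∈ sg := by
    intro i
    induction i with
    | zero => exact hx0
    | succ n _ => exact (hstep n).1
  set xb : H := S⁻¹ • ∑ i ∈ Finset.range (k+1), α i • x i with hxbdef
  have hFconv : ConvexOn ℝ sg (fun y => f y + g y) :=
    (hconvf.subset hdom hconvg.1).add hconvg
  -- Jensen
  have hJ : f xb + g xb ≤ S⁻¹ * ∑ i ∈ Finset.range (k+1), α i * (f (x i) + g (x i)) := by
    have h := hFconv.map_centerMass_le (t := Finset.range (k+1)) (w := α) (p := x)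
      (fun i _ => (hα i).le) hS (fun i _ => hxmem i)
    simpa [Finset.centerMass, smul_eq_mul, Function.comp, hxbdef] using h
  -- the bound, for every solution z
  have hbound : ∀ z ∈ SolSet sg f g,
      (f xb + g xb) - (f xstar + g xstar) ≤ (‖x 0 - z‖^2 + C * Q) / (2 * S) := by
    intro z hz
    have hFz : f z + g z = f xstar + g xstar :=
      le_antisymm (hz.2 xstar hstar.1) (hstar.2 z hz.1)
    have heach : ∀ i ∈ Finset.range (k+1),
        2*(α i * ((f (x i) + g (x i)) - (f z + g z)))
          + (‖x (i+1) - z‖^2 - ‖x i - z‖^2) ≤ C * (α i)^2 := by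
      intro i hi
      have hstepi := pss_step hconvg hdom (hα i) (hu i) (hw i) (hstep i) hz.1
      have hCi := hC i hi
      nlinarith [hstepi, hCi, sq_nonneg (α i)]
    have hsum := Finset.sum_le_sum heach
    rw [Finset.sum_add_distrib, Finset.sum_range_sub (fun i => ‖x i - z‖^2)] at hsum
    have hsum2 : 2 * (∑ i ∈ Finset.range (k+1), α i * ((f (x i) + g (x i)) - (f z + g z)))
        ≤ ‖x 0 - z‖^2 + C * Q := by
      have h1 : (0:ℝ) ≤ ‖x (k+1) - z‖^2 := by positivity
      have h2 : ∑ i ∈ Finset.range (k+1), C * (α i)^2 = C * Q := by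
        rw [hQdef, Finset.mul_sum]
      rw [← Finset.mul_sum] at hsum
      linarith
    have hT : ∑ i ∈ Finset.range (k+1), α i * ((f (x i) + g (x i)) - (f z + g z))
        = (∑ i ∈ Finset.range (k+1), α i * (f (x i) + g (x i))) - S * (f z + g z) := by
      rw [hSdef, Finset.sum_mul]
      rw [← Finset.sum_sub_distrib]
      exact Finset.sum_congr rfl (fun i _ => by ring)
    rw [hT] at hsum2
    -- combine with Jensen
    have hJ2 : S⁻¹ * (∑ i ∈ Finset.range (k+1), α i * (f (x i) + g (x i)))
        ≤ S⁻¹ * (S * (f z + g z) + (‖x 0 - z‖^2 + C * Q) / 2) :=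
      mul_le_mul_of_nonneg_left (by linarith) (inv_nonneg.2 hS.le)
    have hcalc : S⁻¹ * (S * (f z + g z) + (‖x 0 - z‖^2 + C * Q) / 2)
        = (f z + g z) + (‖x 0 - z‖^2 + C * Q) / (2 * S) := by
      field_simp
    rw [hcalc] at hJ2
    have := hJ.trans hJ2
    linarith [hFz ▸ this]
  -- pass to the infimum of distances
  set d : ℝ := Metric.infDist (x 0) (SolSet sg f g) with hddef
  have hd0 : 0 ≤ d := Metric.infDist_nonneg
  by_contra hcon
  push_neg at hcon
  set M : ℝ := (f xb + g xb) - (f xstar + g xstar) with hMdef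
  have hlt : d^2 + C * Q < M * (2 * S) := by
    have := (div_lt_iff₀ (by positivity : (0:ℝ) < 2 * S)).mp hcon
    linarith
  set L : ℝ := M * (2 * S) - C * Q with hLdef
  have hdL : d^2 < L := by rw [hLdef]; linarith
  have hL0 : 0 ≤ L := le_trans (sq_nonneg d) hdL.le
  have hdlt : d < Real.sqrt L := (Real.lt_sqrt hd0).mpr hdL
  obtain ⟨z, hzS, hdz⟩ := (Metric.infDist_lt_iff ⟨xstar, hstar⟩).mp hdlt
  have hz2 : ‖x 0 - z‖^2 < L := by
    have h1 : ‖x 0 - z‖ < Real.sqrt L := by rwa [← dist_eq_norm]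
    have h2 := pow_lt_pow_left₀ h1 (norm_nonneg _) (n := 2) (by norm_num)
    rwa [Real.sq_sqrt hL0] at h2
  have hb := hbound z hzS
  have hb2 : M * (2 * S) ≤ ‖x 0 - z‖^2 + C * Q :=
    (le_div_iff₀ (by positivity : (0:ℝ) < 2 * S)).mp hb
  linarith
end

section
/- Suppose the exogenous stepsizes are α_k = β_k/η_k with η_k = max{1, ‖u^k‖} and there exists ρ ≥ 0 and w^k ∈ ∂g(x^k) with ‖w^k‖ ≤ ρ. Then for all x ∈ dom(g) and all k: ‖x^{k+1} − x‖² ≤ ‖x^k − x‖² + 2(β_k/η_k)[(f+g)(x) − (f+g)(x^k)] + (1 + 2ρ + ρ²)β_k². -/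
open Filter Metric Finset Bornology
open scoped RealInnerProductSpace Topology

lemma prox_subgrad {H : Type*} [NormedAddCommGroup H] [InnerProductSpace ℝ H]
    {s : Set H} {g : H → ℝ} (hconv : ConvexOn ℝ s g)
    {α : ℝ} (hα : 0 < α) {z p : H} (hp : IsProxPt s g α z p) :
    ∀ y ∈ s, α * g p + (inner ℝ (z - p) (y - p) : ℝ) ≤ α * g y := by
  intro y hy
  refine le_of_forall_pos_le_add ?_
  intro ε hε
  set I : ℝ := (inner ℝ (p - z) (y - p) : ℝ) with hI
  set N : ℝ := ‖y - p‖^2 with hN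
  have hN0 : 0 ≤ N := sq_nonneg _
  set t : ℝ := min 1 (2*ε/(N+1)) with ht
  have ht0 : 0 < t := lt_min one_pos (by positivity)
  have ht1 : t ≤ 1 := min_le_left _ _
  have htle : t ≤ 2*ε/(N+1) := min_le_right _ _
  have htN : t*N/2 ≤ ε := by
    rw [div_le_iff₀ (by norm_num : (0:ℝ) < 2)]
    have h : t * (N+1) ≤ 2*ε := by
      rw [← div_mul_cancel₀ (2*ε) (by positivity : (N:ℝ)+1 ≠ 0)]
      exact mul_le_mul_of_nonneg_right htle (by positivity)
    nlinarith
  have hcomb : p + t • (y - p) = (1-t) • p + t • y := by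
    rw [smul_sub, sub_smul, one_smul]; abel
  have hmem : p + t • (y - p) ∈ s := by
    rw [hcomb]; exact hconv.1 hp.1 hy (by linarith) ht0.le (by ring)
  have hg : g (p + t • (y - p)) ≤ (1-t) * g p + t * g y := by
    rw [hcomb]; exact hconv.2 hp.1 hy (by linarith) ht0.le (by ring)
  have hineq := hp.2 _ hmem
  have hexp : ‖(p + t • (y - p)) - z‖^2 = ‖p - z‖^2 + 2*t*I + t^2 * N := by
    have h1 : (p + t • (y - p)) - z = (p - z) + t • (y - p) := by abel
    rw [h1, norm_add_sq_real, real_inner_smul_right, norm_smul, hN, hI]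
    rw [Real.norm_eq_abs, mul_pow, sq_abs]
    ring
  have hineq2 : 2*α*g p + ‖p - z‖^2 ≤ 2*α*g (p + t • (y - p)) + (‖p - z‖^2 + 2*t*I + t^2*N) := by
    have h := mul_le_mul_of_nonneg_left hineq (by positivity : (0:ℝ) ≤ 2*α)
    rw [hexp] at h
    have hαne : (2*α) ≠ 0 := by positivity
    field_simp at h
    nlinarith [h]
  have h2 : t*(2*α*g p) ≤ t*(2*α*g y + 2*I + t*N) := by
    nlinarith [hineq2, mul_le_mul_of_nonneg_left hg (by positivity : (0:ℝ) ≤ 2*α)]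
  have key2 : 2*α*g p ≤ 2*α*g y + 2*I + t*N := le_of_mul_le_mul_left h2 ht0
  have hIz : (inner ℝ (z - p) (y - p) : ℝ) = -I := by
    rw [hI, ← inner_neg_left]; congr 1; abel
  rw [hIz]
  linarith [htN]

set_option maxHeartbeats 1000000 in
theorem pss_exogenous_one_step_inequality
    {H : Type*} [NormedAddCommGroup H] [InnerProductSpace ℝ H] [CompleteSpace H]
    (sf sg : Set H) (f g : H → ℝ)
    (hconvf : ConvexOn ℝ sf f) (hconvg : ConvexOn ℝ sg g)
    (hlscf : LowerSemicontinuousOn f sf) (hlscg : LowerSemicontinuousOn g sg)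
    (hclg : IsClosed sg) (hdom : sg ⊆ sf) (hneg : sg.Nonempty)
    (x u w : ℕ → H) (β : ℕ → ℝ) (hβ : ∀ k, 0 < β k)
    (ρ : ℝ) (hρ : 0 ≤ ρ) (hx0 : x 0 ∈ sg)
    (hu : ∀ k, HasSubgradAt sf f (u k) (x k))
    (hw : ∀ k, HasSubgradAt sg g (w k) (x k))
    (hwb : ∀ k, ‖w k‖ ≤ ρ)
    (hstep : ∀ k, IsProxPt sg g (β k / max 1 ‖u k‖)
      (x k - (β k / max 1 ‖u k‖) • u k) (x (k+1))) :
    ∀ xx ∈ sg, ∀ k : ℕ,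
      ‖x (k+1) - xx‖^2 ≤ ‖x k - xx‖^2
        + 2 * (β k / max 1 ‖u k‖) * ((f xx + g xx) - (f (x k) + g (x k)))
        + (1 + 2*ρ + ρ^2) * (β k)^2 := by
  have hmemx : ∀ n, x n ∈ sg := by
    intro n
    induction n with
    | zero => exact hx0
    | succ n _ => exact (hstep n).1
  intro xx hxx k
  set η : ℝ := max 1 ‖u k‖ with hηdef
  have hη1 : (1:ℝ) ≤ η := le_max_left _ _
  have hη0 : 0 < η := lt_of_lt_of_le one_pos hη1
  have huη : ‖u k‖ ≤ η := le_max_right _ _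
  set α : ℝ := β k / η with hαdef
  have hαpos : 0 < α := div_pos (hβ k) hη0
  have hαη : α * η = β k := div_mul_cancel₀ _ (ne_of_gt hη0)
  set p := x (k+1) with hpdef
  set xk := x k with hxkdef
  -- inner product abbreviations
  set Iab : ℝ := (inner ℝ (p - xk) (xk - xx) : ℝ) with hIab
  set Iua : ℝ := (inner ℝ (u k) (p - xk) : ℝ) with hIua
  set Iub : ℝ := (inner ℝ (u k) (xk - xx) : ℝ) with hIub
  set Iwa : ℝ := (inner ℝ (w k) (p - xk) : ℝ) with hIwa
  -- norm expansion
  have hnorm : ‖p - xx‖^2 = ‖p - xk‖^2 + 2*Iab + ‖xk - xx‖^2 := by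
    have h1 : p - xx = (p - xk) + (xk - xx) := by abel
    rw [h1, norm_add_sq_real, hIab]
  -- subgradient of f at xk
  have h1 : f xk - Iub ≤ f xx := by
    have := hu k xx (hdom hxx)
    have hb : xx - xk = -(xk - xx) := by abel
    rw [hb, inner_neg_right] at this
    rw [hIub]; linarith
  -- subgradient of g at xk
  have h2 : g xk + Iwa ≤ g p := hw k p (hmemx (k+1))
  -- prox subgradient inequality
  have h3 := prox_subgrad hconvg hαpos (hstep k) xx hxx
  have hzp : (xk - α • u k) - p = -((p - xk) + α • u k) := by abel
  have hxxp : xx - p = -((p - xk) + (xk - xx)) := by abel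
  have hIcalc : (inner ℝ ((xk - α • u k) - p) (xx - p) : ℝ)
      = ‖p - xk‖^2 + Iab + α*Iua + α*Iub := by
    rw [hzp, hxxp, inner_neg_neg, inner_add_left, inner_add_right, inner_add_right,
      real_inner_smul_left, real_inner_smul_left, real_inner_self_eq_norm_sq]
    rw [hIab, hIua, hIub]
    ring
  rw [hIcalc] at h3
  -- Cauchy-Schwarz
  have hcs : -(‖u k + w k‖ * ‖p - xk‖) ≤ Iua + Iwa := by
    have h := abs_real_inner_le_norm (u k + w k) (p - xk)
    rw [inner_add_left, ← hIua, ← hIwa] at h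
    linarith [neg_abs_le (Iua + Iwa)]
  -- bound on ‖u+w‖
  have hub : ‖u k + w k‖ ≤ η * (1+ρ) := by
    have h := norm_add_le (u k) (w k)
    have hwρ : ‖w k‖ ≤ ρ * η := le_trans (hwb k) (le_mul_of_one_le_right hρ hη1)
    nlinarith
  have h5 : α * ‖u k + w k‖ ≤ β k * (1+ρ) := by
    calc α * ‖u k + w k‖ ≤ α * (η * (1+ρ)) :=
          mul_le_mul_of_nonneg_left hub hαpos.le
      _ = β k * (1+ρ) := by rw [← mul_assoc, hαη]
  have h6 : (α * ‖u k + w k‖)^2 ≤ (β k * (1+ρ))^2 := by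
    have hnn : 0 ≤ α * ‖u k + w k‖ := by positivity
    nlinarith
  -- combine h1, h2, h3 (multiplied by α)
  have hsum : α*(f xk + g xk) + ‖p - xk‖^2 + Iab + α*(Iua + Iwa) ≤ α*(f xx + g xx) := by
    have m1 := mul_le_mul_of_nonneg_left h1 hαpos.le
    have m2 := mul_le_mul_of_nonneg_left h2 hαpos.le
    rw [mul_sub] at m1
    rw [mul_add] at m2
    rw [mul_add, mul_add, mul_add]
    linarith [h3]
  -- final assembly
  have hcsα : -(α * ‖u k + w k‖ * ‖p - xk‖) ≤ α * (Iua + Iwa) := by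
    have hm := mul_le_mul_of_nonneg_left hcs hαpos.le
    have : α * -(‖u k + w k‖ * ‖p - xk‖) = -(α * ‖u k + w k‖ * ‖p - xk‖) := by ring
    linarith [hm, this.ge.trans hm]
  have goal2 : ‖p - xx‖^2 ≤ ‖xk - xx‖^2 + 2*α*((f xx + g xx) - (f xk + g xk))
      + (1 + 2*ρ + ρ^2) * (β k)^2 := by
    nlinarith [hnorm, hsum, hcsα, h6, sq_nonneg (‖p - xk‖ - α * ‖u k + w k‖),
      hαpos.le, sq_nonneg (‖p - xk‖)]
  calc ‖p - xx‖^2 ≤ ‖xk - xx‖^2 + 2*α*((f xx + g xx) - (f xk + g xk))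
      + (1 + 2*ρ + ρ^2) * (β k)^2 := goal2
    _ = ‖xk - xx‖^2 + 2 * (β k / η) * ((f xx + g xx) - (f xk + g xk))
      + (1 + 2*ρ + ρ^2) * (β k)^2 := by rw [hαdef]
end

section
/- Let (φ_k) be a sequence of nonnegative reals, (β_k) nonnegative with Σβ_k = +∞ and Σ β_k φ_k < +∞, and suppose there is ρ̄ > 0 with φ_k − φ_{k+1} ≤ ρ̄ β_k for all k. Then lim_{k→∞} φ_k = 0. -/
open Filter Metric Finset Bornology
open scoped RealInnerProductSpace Topology

theorem nonneg_summable_prod_tendsto_zero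
    (φ β : ℕ → ℝ) (ρbar : ℝ) (hρ : 0 < ρbar)
    (hφ : ∀ k, 0 ≤ φ k) (hβ : ∀ k, 0 ≤ β k)
    (hdiv : Filter.Tendsto (fun n => ∑ i ∈ Finset.range n, β i) Filter.atTop Filter.atTop)
    (hsum : Summable (fun k => β k * φ k))
    (hstep : ∀ k, φ k - φ (k+1) ≤ ρbar * β k) :
    Filter.Tendsto φ Filter.atTop (nhds 0) := by
  -- telescoping: φ n - φ m ≤ ρbar * ∑_{j ∈ Ico n m} β j for n ≤ m
  have tele : ∀ n m : ℕ, n ≤ m → φ n - φ m ≤ ρbar * ∑ j ∈ Finset.Ico n m, β j := by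
    intro n m hnm
    have h1 : φ n - φ m = ∑ j ∈ Finset.Ico n m, (φ j - φ (j+1)) := by
      rw [Finset.sum_Ico_eq_sub _ hnm, Finset.sum_range_sub' φ, Finset.sum_range_sub' φ]
      ring
    rw [h1, Finset.mul_sum]
    exact Finset.sum_le_sum fun j _ => hstep j
  rw [Metric.tendsto_atTop]
  intro ε hε
  set δ : ℝ := ε^2 / (4 * ρbar) with hδdef
  have hδ : 0 < δ := by positivity
  have hc : CauchySeq (fun n => ∑ i ∈ Finset.range n, β i * φ i) :=
    hsum.hasSum.tendsto_sum_nat.cauchySeq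
  rcases Metric.cauchySeq_iff'.mp hc δ hδ with ⟨N, hN⟩
  -- tail bound: for N ≤ n ≤ m, ∑_{j ∈ Ico n m} β j φ j < δ
  have tail : ∀ n m : ℕ, N ≤ n → n ≤ m → ∑ j ∈ Finset.Ico n m, β j * φ j < δ := by
    intro n m hNn hnm
    have hm : ∑ j ∈ Finset.Ico N m, β j * φ j < δ := by
      have := hN m (le_trans hNn hnm)
      rw [Real.dist_eq, abs_sub_lt_iff] at this
      have h2 : ∑ j ∈ Finset.Ico N m, β j * φ j
          = ∑ i ∈ Finset.range m, β i * φ i - ∑ i ∈ Finset.range N, β i * φ i := by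
        rw [Finset.sum_Ico_eq_sub _ (le_trans hNn hnm)]
      linarith [this.1]
    refine lt_of_le_of_lt ?_ hm
    apply Finset.sum_le_sum_of_subset_of_nonneg
    · exact Finset.Ico_subset_Ico hNn le_rfl
    · intro j _ _; exact mul_nonneg (hβ j) (hφ j)
  refine ⟨N, fun n hn => ?_⟩
  rw [Real.dist_eq, sub_zero, abs_of_nonneg (hφ n)]
  by_contra hcon
  push_neg at hcon
  -- claim: φ stays ≥ ε/2 forever after n
  have claim : ∀ k, n ≤ k → ∀ j, n ≤ j → j ≤ k → ε / 2 ≤ φ j := by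
    intro k hk
    induction k, hk using Nat.le_induction with
    | base => intro j h1 h2; have : j = n := le_antisymm h2 h1; rw [this]; linarith
    | succ k hk ih =>
      intro j h1 h2
      rcases Nat.lt_succ_iff_lt_or_eq.mp (Nat.lt_succ_of_le h2) with h | h
      · exact ih j h1 (Nat.lt_succ_iff.mp h)
      · subst h
        -- bound ∑_{j ∈ Ico n (k+1)} β j
        have hB : ∑ j ∈ Finset.Ico n (k+1), β j ≤ ε / (2 * ρbar) := by
          have h3 : (ε/2) * ∑ j ∈ Finset.Ico n (k+1), β j
              ≤ ∑ j ∈ Finset.Ico n (k+1), β j * φ j := by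
            rw [Finset.mul_sum]
            apply Finset.sum_le_sum
            intro j hj
            rw [Finset.mem_Ico] at hj
            have := ih j hj.1 (Nat.lt_succ_iff.mp hj.2)
            nlinarith [hβ j]
          have h4 : ∑ j ∈ Finset.Ico n (k+1), β j * φ j < δ :=
            tail n (k+1) hn (le_trans hk (Nat.le_succ k))
          rw [hδdef] at h4
          have h4' := (lt_div_iff₀ (by positivity : (0:ℝ) < 4*ρbar)).mp h4
          rw [le_div_iff₀ (by positivity : (0:ℝ) < 2*ρbar)]
          nlinarith [h3, h4', hε, hρ]
        have h5 := tele n (k+1) (le_trans hk (Nat.le_succ k))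
        have h6 : ρbar * ∑ j ∈ Finset.Ico n (k+1), β j ≤ ε / 2 := by
          have := mul_le_mul_of_nonneg_left hB (le_of_lt hρ)
          calc ρbar * ∑ j ∈ Finset.Ico n (k+1), β j ≤ ρbar * (ε / (2*ρbar)) := this
            _ = ε / 2 := by field_simp
        linarith
  -- contradiction with divergence
  have bound : ∀ m, ∑ i ∈ Finset.range m, β i ≤ ∑ i ∈ Finset.range n, β i + ε / (2*ρbar) := by
    intro m
    rcases le_or_gt m n with h | h
    · have : ∑ i ∈ Finset.range m, β i ≤ ∑ i ∈ Finset.range n, β i :=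
        Finset.sum_le_sum_of_subset_of_nonneg (Finset.range_subset_range.mpr h)
          (fun j _ _ => hβ j)
      have : 0 ≤ ε / (2*ρbar) := by positivity
      linarith
    · have hnm := le_of_lt h
      have h3 : (ε/2) * ∑ j ∈ Finset.Ico n m, β j ≤ ∑ j ∈ Finset.Ico n m, β j * φ j := by
        rw [Finset.mul_sum]
        apply Finset.sum_le_sum
        intro j hj
        rw [Finset.mem_Ico] at hj
        have := claim j hj.1 j hj.1 le_rfl
        nlinarith [hβ j]
      have h4 := tail n m hn hnm
      have hB : ∑ j ∈ Finset.Ico n m, β j ≤ ε / (2 * ρbar) := by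
        rw [hδdef] at h4
        have h4' := (lt_div_iff₀ (by positivity : (0:ℝ) < 4*ρbar)).mp h4
        rw [le_div_iff₀ (by positivity : (0:ℝ) < 2*ρbar)]
        nlinarith [h3, h4', hε, hρ]
      have h5 : ∑ i ∈ Finset.range m, β i
          = ∑ i ∈ Finset.range n, β i + ∑ j ∈ Finset.Ico n m, β j := by
        rw [Finset.sum_Ico_eq_sub _ hnm]; ring
      linarith
  rcases (Filter.tendsto_atTop.mp hdiv (∑ i ∈ Finset.range n, β i + ε / (2*ρbar) + 1)).exists
    with ⟨m, hm⟩
  linarith [bound m]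
end

section
/- If a sequence (x^k) in a real Hilbert space is quasi-Fejér convergent to a nonempty set S (i.e. for each x ∈ S there is a summable nonnegative sequence (ε_k) with ‖x^{k+1} − x‖² ≤ ‖x^k − x‖² + ε_k for all k), then (x^k) is bounded. -/
open Filter Metric Finset Bornology
open scoped RealInnerProductSpace Topology

theorem quasiFejer_bounded
    {H : Type*} [NormedAddCommGroup H] [InnerProductSpace ℝ H] [CompleteSpace H]
    (x : ℕ → H) (S : Set H) (hS : S.Nonempty)
    (h : ∀ z ∈ S, ∃ ε : ℕ → ℝ, (∀ k, 0 ≤ ε k) ∧ Summable ε ∧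
      ∀ k, ‖x (k+1) - z‖^2 ≤ ‖x k - z‖^2 + ε k) :
    Bornology.IsBounded (Set.range x) := by
  obtain ⟨z, hz⟩ := hS
  obtain ⟨ε, hε0, hεs, hrec⟩ := h z hz
  have key : ∀ k, ‖x k - z‖^2 ≤ ‖x 0 - z‖^2 + ∑' n, ε n := by
    intro k
    have hmono : ∀ k, ‖x k - z‖^2 ≤ ‖x 0 - z‖^2 + ∑ i ∈ Finset.range k, ε i := by
      intro k
      induction k with
      | zero => simp
      | succ n ih =>
        calc ‖x (n+1) - z‖^2 ≤ ‖x n - z‖^2 + ε n := hrec n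
        _ ≤ ‖x 0 - z‖^2 + ∑ i ∈ Finset.range n, ε i + ε n := by linarith
        _ = ‖x 0 - z‖^2 + ∑ i ∈ Finset.range (n+1), ε i := by
            rw [Finset.sum_range_succ]; ring
    refine (hmono k).trans ?_
    have := Summable.sum_le_tsum (Finset.range k) (fun i _ => hε0 i) hεs
    linarith
  have hnorm : ∀ k, ‖x k - z‖ ≤ Real.sqrt (‖x 0 - z‖^2 + ∑' n, ε n) := by
    intro k
    have h1 := key k
    have := Real.sqrt_le_sqrt h1
    rwa [Real.sqrt_sq (norm_nonneg _)] at this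
  apply Metric.isBounded_range_iff.mpr
  refine ⟨2 * Real.sqrt (‖x 0 - z‖^2 + ∑' n, ε n), fun i j => ?_⟩
  calc dist (x i) (x j) ≤ dist (x i) z + dist z (x j) := dist_triangle _ _ _
  _ ≤ _ := by
      rw [dist_eq_norm, dist_eq_norm, ← norm_neg (z - x j)]
      have := hnorm i; have := hnorm j
      simp only [neg_sub]
      linarith
end

section
/- Let (x^k) be generated by the proximal subgradient splitting method with exogenous stepsizes α_k = β_k/max{1,‖u^k‖}, Σβ_k² < ∞, Σβ_k = ∞, under assumptions A1 (subgradients of f bounded on bounded subsets of dom g) and A2 (bounded selections of ∂g on dom g). If S* ≠ ∅, then lim_{k→∞}(f+g)(x^k) = min(f+g) and (x^k) converges weakly to some point of S*. -/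
open Filter Metric Finset Bornology
open scoped RealInnerProductSpace Topology

lemma quasi_fejer_aux (a ε c : ℕ → ℝ) (ha : ∀ k, 0 ≤ a k) (hc : ∀ k, 0 ≤ c k)
    (hε : ∀ k, 0 ≤ ε k) (hsum : Summable ε)
    (hrec : ∀ k, a (k+1) + c k ≤ a k + ε k) :
    Summable c ∧ ∃ L, Tendsto a atTop (nhds L) := by
  have hpart : ∀ n, ∑ k ∈ range n, c k + a n ≤ a 0 + ∑ k ∈ range n, ε k := by
    intro n
    induction n with
    | zero => simp
    | succ n ih =>
      rw [Finset.sum_range_succ, Finset.sum_range_succ]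
      have := hrec n
      linarith
  have hcs : Summable c := by
    apply summable_of_sum_range_le hc (c := a 0 + ∑' k, ε k)
    intro n
    have h1 := hpart n
    have h2 : ∑ k ∈ range n, ε k ≤ ∑' k, ε k :=
      Summable.sum_le_tsum _ (fun i _ => hε i) hsum
    have := ha n
    linarith
  refine ⟨hcs, ?_⟩
  set T : ℕ → ℝ := fun n => ∑' k, ε (n + k) with hT
  have hTsummable : ∀ n, Summable (fun k => ε (n + k)) := by
    intro n
    have := (summable_nat_add_iff n).2 hsum
    simpa [add_comm] using this
  have hTrec : ∀ n, T n = ε n + T (n+1) := by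
    intro n
    have h := Summable.tsum_eq_zero_add (hTsummable n)
    simpa [hT, add_comm, add_assoc, add_left_comm] using h
  have hTnonneg : ∀ n, 0 ≤ T n := fun n => tsum_nonneg (fun k => hε _)
  have hT0 : Tendsto T atTop (nhds 0) := by
    have := tendsto_sum_nat_add ε
    simpa [hT, add_comm] using this
  set b : ℕ → ℝ := fun n => a n + T n with hb
  have hbanti : Antitone b := by
    apply antitone_nat_of_succ_le
    intro n
    have h1 := hrec n
    have h2 := hTrec n
    have h3 := hc n
    simp only [hb]
    linarith
  have hbdd : BddBelow (Set.range b) := by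
    refine ⟨0, ?_⟩
    rintro r ⟨n, rfl⟩
    exact add_nonneg (ha n) (hTnonneg n)
  have hbt : Tendsto b atTop (nhds (⨅ i, b i)) := tendsto_atTop_ciInf hbanti hbdd
  refine ⟨(⨅ i, b i) - 0, ?_⟩
  have : a = fun n => b n - T n := by funext n; simp [hb]
  rw [this]
  exact hbt.sub hT0

lemma seq_to_zero (t δ : ℕ → ℝ) (C : ℝ) (hC : 0 < C) (ht : ∀ k, 0 ≤ t k)
    (hδ : ∀ k, 0 < δ k) (hδ0 : Tendsto δ atTop (nhds 0))
    (hdiv : Tendsto (fun n => ∑ i ∈ range n, δ i) atTop atTop)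
    (hsum : Summable (fun k => δ k * t k))
    (hup : ∀ k, t (k+1) ≤ t k + C * δ k) :
    Tendsto t atTop (nhds 0) := by
  classical
  have htel : ∀ m n, m ≤ n → t n ≤ t m + C * ∑ j ∈ Finset.Ico m n, δ j := by
    intro m n hmn
    induction n, hmn using Nat.le_induction with
    | base => simp
    | succ n hmn ih =>
      have h1 := hup n
      have h2 : ∑ j ∈ Finset.Ico m (n+1), δ j = ∑ j ∈ Finset.Ico m n, δ j + δ n := by
        rw [Finset.sum_Ico_succ_top hmn]
      rw [h2]
      linarith
  have hlow : ∀ ε : ℝ, 0 < ε → ∀ K : ℕ, ∃ k, K ≤ k ∧ t k < ε := by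
    intro ε hε K
    by_contra hcon
    push_neg at hcon
    have hge : ∀ k, ε * δ (k + K) ≤ δ (k + K) * t (k + K) := by
      intro k
      have h1 : ε ≤ t (k + K) := hcon (k + K) (Nat.le_add_left _ _)
      have h2 := (hδ (k + K)).le
      nlinarith
    have hs1 : Summable (fun k => δ (k + K) * t (k + K)) :=
      (summable_nat_add_iff K).2 hsum
    have hs2 : Summable (fun k => ε * δ (k + K)) :=
      Summable.of_nonneg_of_le (fun k => mul_nonneg hε.le (hδ _).le) hge hs1
    have hs3 : Summable (fun k => δ (k + K)) := by
      have := hs2.mul_left ε⁻¹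
      simpa [← mul_assoc, inv_mul_cancel₀ hε.ne'] using this
    have hs4 : Summable δ := (summable_nat_add_iff K).1 hs3
    exact not_tendsto_nhds_of_tendsto_atTop hdiv _ hs4.hasSum.tendsto_sum_nat
  rw [Metric.tendsto_atTop]
  intro ε hε
  set B := ε^2 / (8*C) with hB
  have hBpos : 0 < B := by positivity
  set S : ℕ → ℝ := fun n => ∑ i ∈ range n, δ i * t i with hS
  set ℓ := ∑' k, δ k * t k with hℓ
  have hSle : ∀ n, S n ≤ ℓ := fun n =>
    Summable.sum_le_tsum _ (fun i _ => mul_nonneg (hδ i).le (ht i)) hsum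
  have hStend : Tendsto S atTop (nhds ℓ) := hsum.hasSum.tendsto_sum_nat
  obtain ⟨N₁, hN₁⟩ : ∃ N₁, ℓ - S N₁ < B := by
    rcases Metric.tendsto_atTop.1 hStend B hBpos with ⟨N, hN⟩
    have := hN N le_rfl
    rw [Real.dist_eq] at this
    exact ⟨N, by cases abs_cases (S N - ℓ) with
      | inl h => linarith [h.1]
      | inr h => linarith [h.1]⟩
  have hIco : ∀ m n, N₁ ≤ m → m ≤ n → ∑ j ∈ Finset.Ico m n, δ j * t j < B := by
    intro m n hm hmn
    have h1 : ∑ j ∈ Finset.Ico m n, δ j * t j = S n - S m := by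
      simp [hS, Finset.sum_Ico_eq_sub _ hmn]
    have h2 : S N₁ ≤ S m := by
      apply Finset.sum_le_sum_of_subset_of_nonneg (Finset.range_subset_range.2 hm)
      intro i _ _; exact mul_nonneg (hδ i).le (ht i)
    have := hSle n
    linarith
  obtain ⟨N₂, hN₂⟩ : ∃ N₂, ∀ k ≥ N₂, δ k < ε / (4*C) := by
    rcases Metric.tendsto_atTop.1 hδ0 (ε / (4*C)) (by positivity) with ⟨N, hN⟩
    refine ⟨N, fun k hk => ?_⟩
    have := hN k hk
    rw [Real.dist_eq, sub_zero, abs_of_nonneg (hδ k).le] at this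
    exact this
  obtain ⟨K, hKge, hKlt⟩ := hlow (ε/2) (by positivity) (max N₁ N₂)
  refine ⟨K + 1, fun n hn => ?_⟩
  rw [Real.dist_eq, sub_zero, abs_of_nonneg (ht n)]
  by_contra hcon
  push_neg at hcon
  set P : ℕ → Prop := fun j => K ≤ j ∧ t j < ε/2 with hP
  have hPK : P K := ⟨le_rfl, hKlt⟩
  have hKn : K ≤ n - 1 := by omega
  set m := Nat.findGreatest P (n-1) with hm
  have hPm : P m := Nat.findGreatest_spec hKn hPK
  have hmle : m ≤ n - 1 := Nat.findGreatest_le _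
  have hmltn : m < n := by omega
  have hhigh : ∀ j, m < j → j < n → ε/2 ≤ t j := by
    intro j hj1 hj2
    by_contra hcj
    push_neg at hcj
    exact Nat.findGreatest_is_greatest hj1 (by omega) ⟨le_trans hPm.1 (by omega), hcj⟩
  have hclimb : ε/2 ≤ t n - t m := by
    have := hPm.2
    linarith
  have htel' := htel m n hmltn.le
  have hsumδ : ε / (2*C) ≤ ∑ j ∈ Finset.Ico m n, δ j := by
    rw [div_le_iff₀ (by positivity)]
    nlinarith
  have hsplit : ∑ j ∈ Finset.Ico m n, δ j = δ m + ∑ j ∈ Finset.Ico (m+1) n, δ j :=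
    Finset.sum_eq_sum_Ico_succ_bot hmltn _
  have hδm : δ m < ε / (4*C) := hN₂ m (le_trans (le_max_right _ _) (le_trans hKge hPm.1))
  have htail : ε / (4*C) ≤ ∑ j ∈ Finset.Ico (m+1) n, δ j := by
    have : ε/(2*C) - ε/(4*C) = ε/(4*C) := by ring
    linarith
  have hlb : ε/2 * (ε / (4*C)) ≤ ∑ j ∈ Finset.Ico (m+1) n, δ j * t j := by
    calc ε/2 * (ε / (4*C)) ≤ ε/2 * ∑ j ∈ Finset.Ico (m+1) n, δ j := by
          apply mul_le_mul_of_nonneg_left htail (by positivity)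
      _ = ∑ j ∈ Finset.Ico (m+1) n, ε/2 * δ j := by rw [Finset.mul_sum]
      _ ≤ ∑ j ∈ Finset.Ico (m+1) n, δ j * t j := by
          apply Finset.sum_le_sum
          intro j hj
          rw [Finset.mem_Ico] at hj
          have h1 : ε/2 ≤ t j := hhigh j hj.1 hj.2
          have h2 := (hδ j).le
          nlinarith
  have hub : ∑ j ∈ Finset.Ico (m+1) n, δ j * t j < B :=
    hIco (m+1) n (by have := le_trans (le_max_left N₁ N₂) hKge; omega) (by omega)
  have hBe : ε/2 * (ε/(4*C)) = B := by rw [hB]; ring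
  linarith

set_option maxHeartbeats 1000000 in
theorem pss_exogenous_weak_convergence
    {H : Type*} [NormedAddCommGroup H] [InnerProductSpace ℝ H] [CompleteSpace H]
    (sf sg : Set H) (f g : H → ℝ)
    (hconvf : ConvexOn ℝ sf f) (hconvg : ConvexOn ℝ sg g)
    (hlscf : LowerSemicontinuousOn f sf) (hlscg : LowerSemicontinuousOn g sg)
    (hclg : IsClosed sg) (hdom : sg ⊆ sf) (hneg : sg.Nonempty)
    (A1 : ∀ V : Set H, V ⊆ sg → Bornology.IsBounded V → IsClosed V →
      ∃ ζ > 0, ∀ z ∈ V, ∀ uu : H, HasSubgradAt sf f uu z → ‖uu‖ ≤ ζ)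
    (A2 : ∃ ρ ≥ (0:ℝ), ∀ z ∈ sg, ∃ ww : H, HasSubgradAt sg g ww z ∧ ‖ww‖ ≤ ρ)
    (x u : ℕ → H) (β : ℕ → ℝ) (hβ : ∀ k, 0 < β k)
    (hβ2 : Summable (fun k => (β k)^2))
    (hβdiv : Filter.Tendsto (fun n => ∑ i ∈ Finset.range n, β i) Filter.atTop Filter.atTop)
    (hx0 : x 0 ∈ sg)
    (hu : ∀ k, HasSubgradAt sf f (u k) (x k))
    (hstep : ∀ k, IsProxPt sg g (β k / max 1 ‖u k‖)
      (x k - (β k / max 1 ‖u k‖) • u k) (x (k+1)))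
    (xstar : H) (hstar : xstar ∈ SolSet sg f g) :
    Filter.Tendsto (fun k => f (x k) + g (x k)) Filter.atTop (nhds (f xstar + g xstar))
    ∧ ∃ p ∈ SolSet sg f g, ∀ y : H,
        Filter.Tendsto (fun k => (inner ℝ (x k) y : ℝ)) Filter.atTop (nhds (inner ℝ p y : ℝ)) := by
  classical
  obtain ⟨ρ, hρ0, hA2⟩ := A2
  have hxmem : ∀ k, x k ∈ sg := by
    intro k
    cases k with
    | zero => exact hx0
    | succ k => exact (hstep k).1
  choose w hw hwρ using fun k => hA2 (x k) (hxmem k)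
  set α : ℕ → ℝ := fun k => β k / max 1 ‖u k‖ with hα
  have hmaxpos : ∀ k, (0:ℝ) < max 1 ‖u k‖ := fun k => lt_of_lt_of_le one_pos (le_max_left _ _)
  have hα_pos : ∀ k, 0 < α k := fun k => div_pos (hβ k) (hmaxpos k)
  have hα_le : ∀ k, α k ≤ β k := fun k => div_le_self (hβ k).le (le_max_left _ _)
  have hαu : ∀ k, α k * ‖u k‖ ≤ β k := by
    intro k
    rw [hα]
    simp only
    rw [div_mul_eq_mul_div, div_le_iff₀ (hmaxpos k)]
    exact mul_le_mul_of_nonneg_left (le_max_right _ _) (hβ k).le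
  -- strongly convex prox inequality
  have hkey : ∀ k, ∀ y ∈ sg,
      g (x (k+1)) + (1/(2*α k)) * ‖x (k+1) - (x k - α k • u k)‖^2
        + (1/(2*α k)) * ‖y - x (k+1)‖^2
      ≤ g y + (1/(2*α k)) * ‖y - (x k - α k • u k)‖^2 := by
    intro k y hy
    obtain ⟨hP, hmin⟩ := hstep k
    set P := x (k+1) with hPdef
    set z := x k - α k • u k with hz
    set c := 1/(2*α k) with hc
    have hcpos : 0 < c := by
      rw [hc]
      have := hα_pos k
      positivity
    have h1 : ∀ t : ℝ, 0 < t → t < 1 →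
        g P + c*‖P - z‖^2 + c*(1-t)*‖y-P‖^2 ≤ g y + c*‖y - z‖^2 := by
      intro t ht0 ht1
      set yt := P + t • (y - P) with hyt
      have hyt_comb : yt = (1-t) • P + t • y := by
        rw [hyt]; module
      have hytmem : yt ∈ sg := by
        rw [hyt_comb]
        exact hconvg.1 hP hy (by linarith) ht0.le (by ring)
      have hgyt : g yt ≤ (1-t) * g P + t * g y := by
        rw [hyt_comb]
        exact hconvg.2 hP hy (by linarith) ht0.le (by ring)
      have hmin' := hmin yt hytmem
      have e1 : yt - z = (P - z) + t • (y - P) := by rw [hyt]; abel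
      have e2 : ‖yt - z‖^2
          = ‖P-z‖^2 + 2*t*(inner ℝ (P-z) (y-P) : ℝ) + t^2*‖y-P‖^2 := by
        rw [e1, norm_add_sq_real, real_inner_smul_right, norm_smul, Real.norm_eq_abs,
          mul_pow, sq_abs]
        ring
      have e3 : ‖y - z‖^2 = ‖P-z‖^2 + 2*(inner ℝ (P-z) (y-P) : ℝ) + ‖y-P‖^2 := by
        have hyz : y - z = (P - z) + (y - P) := by abel
        rw [hyz, norm_add_sq_real]
      rw [e2] at hmin'
      have h4 : t * g P ≤ t * (g y + 2*c*(inner ℝ (P-z) (y-P) : ℝ) + c*t*‖y-P‖^2) := by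
        nlinarith [hmin', hgyt]
      have h5 : g P ≤ g y + 2*c*(inner ℝ (P-z) (y-P) : ℝ) + c*t*‖y-P‖^2 :=
        le_of_mul_le_mul_left h4 ht0
      rw [e3]
      nlinarith [h5]
    have hlim : Tendsto (fun n : ℕ => g P + c*‖P-z‖^2 + (c*(1 - 1/(n+1)))*‖y-P‖^2)
        atTop (nhds (g P + c*‖P-z‖^2 + (c*(1 - 0))*‖y-P‖^2)) := by
      refine tendsto_const_nhds.add ?_
      have h1t : Tendsto (fun n:ℕ => (1:ℝ) - 1/(n+1)) atTop (nhds (1-0)) :=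
        tendsto_const_nhds.sub tendsto_one_div_add_atTop_nhds_zero_nat
      exact ((h1t.const_mul c).mul_const _)
    have hfinal : g P + c*‖P-z‖^2 + (c*(1-0))*‖y-P‖^2 ≤ g y + c*‖y - z‖^2 := by
      refine le_of_tendsto hlim ?_
      filter_upwards [eventually_ge_atTop 1] with n hn
      have hn1 : (1:ℝ) ≤ (n:ℝ) := by exact_mod_cast hn
      have ht0 : (0:ℝ) < 1/(n+1) := by positivity
      have ht1 : (1:ℝ)/(n+1) < 1 := by
        rw [div_lt_one (by positivity)]
        linarith
      have := h1 (1/(n+1)) ht0 ht1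
      linarith
    have : c*(1-0) = c := by ring
    rw [this] at hfinal
    linarith [hfinal]
  -- premultiplied version
  have hkey2 : ∀ k, ∀ y ∈ sg,
      2*(α k)*(g (x (k+1))) + ‖x (k+1) - (x k - α k • u k)‖^2 + ‖y - x (k+1)‖^2
      ≤ 2*(α k)*(g y) + ‖y - (x k - α k • u k)‖^2 := by
    intro k y hy
    have h := hkey k y hy
    have hapos : (0:ℝ) < 2*α k := by have := hα_pos k; linarith
    have h2 := mul_le_mul_of_nonneg_left h hapos.le
    have hq : 2 * α k * (1/(2*α k)) = 1 := mul_one_div_cancel hapos.ne'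
    simp only [mul_add, ← mul_assoc, hq, one_mul] at h2
    exact h2
  -- expansions
  have hexp : ∀ k (v : H), ‖v - (x k - α k • u k)‖^2
      = ‖v - x k‖^2 + 2*(α k)*(inner ℝ (v - x k) (u k) : ℝ) + (α k)^2*‖u k‖^2 := by
    intro k v
    have e : v - (x k - α k • u k) = (v - x k) + α k • u k := by abel
    rw [e, norm_add_sq_real, real_inner_smul_right, norm_smul, Real.norm_eq_abs,
      mul_pow, sq_abs]
    ring
  -- step length bound
  have hd : ∀ k, ‖x (k+1) - x k‖ ≤ α k * (ρ + ‖u k‖) := by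
    intro k
    have h := hkey2 k (x k) (hxmem k)
    rw [hexp k (x (k+1)), hexp k (x k)] at h
    have hz0 : x k - x k = (0:H) := sub_self _
    rw [hz0] at h
    simp only [norm_zero, inner_zero_left, norm_sub_rev (x k) (x (k+1))] at h
    set N := ‖x (k+1) - x k‖ with hN
    have hNnn : 0 ≤ N := norm_nonneg _
    have hsubg := hw k (x (k+1)) (hxmem (k+1))
    have hcsw : -(ρ * N) ≤ (inner ℝ (w k) (x (k+1) - x k) : ℝ) := by
      have h1 := abs_real_inner_le_norm (w k) (x (k+1) - x k)
      have h2 : ‖w k‖ * N ≤ ρ * N := mul_le_mul_of_nonneg_right (hwρ k) hNnn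
      have h3 := neg_abs_le (inner ℝ (w k) (x (k+1) - x k) : ℝ)
      linarith
    have hcsu : -(N * ‖u k‖) ≤ (inner ℝ (x (k+1) - x k) (u k) : ℝ) := by
      have h1 := abs_real_inner_le_norm (x (k+1) - x k) (u k)
      have h3 := neg_abs_le (inner ℝ (x (k+1) - x k) (u k) : ℝ)
      linarith
    have hapos := hα_pos k
    have hglow : g (x k) - g (x (k+1)) ≤ ρ * N := by linarith
    have hm1 : 2 * α k * (g (x k) - g (x (k+1))) ≤ 2 * α k * (ρ * N) :=
      mul_le_mul_of_nonneg_left hglow (by linarith)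
    have hm2 : 2 * α k * (-(N * ‖u k‖)) ≤ 2 * α k * (inner ℝ (x (k+1) - x k) (u k) : ℝ) :=
      mul_le_mul_of_nonneg_left hcsu (by linarith)
    have hNsq : N^2 ≤ α k * (ρ + ‖u k‖) * N := by linarith
    rcases eq_or_lt_of_le hNnn with h0 | h0
    · rw [← h0]
      positivity
    · exact le_of_mul_le_mul_right (by linarith : N * N ≤ (α k * (ρ + ‖u k‖)) * N) h0
  have hd2 : ∀ k, ‖x (k+1) - x k‖ ≤ (ρ+1) * β k := by
    intro k
    have h := hd k
    have h1 : α k * ρ ≤ β k * ρ := mul_le_mul_of_nonneg_right (hα_le k) hρ0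
    have h2 := hαu k
    have hb := (hβ k).le
    linarith
  -- main inequality
  set CC : ℝ := 1 + 2*ρ*(ρ+1) with hCC
  have hCCpos : 0 < CC := by rw [hCC]; nlinarith
  have hmain : ∀ k, ∀ y ∈ sg, ‖x (k+1) - y‖^2
      ≤ ‖x k - y‖^2 + CC * (β k)^2
        - 2*(α k)*((f (x k) + g (x k)) - (f y + g y)) := by
    intro k y hy
    have h := hkey2 k y hy
    rw [hexp k (x (k+1)), hexp k y] at h
    set N := ‖x (k+1) - x k‖ with hN
    have hNnn : 0 ≤ N := norm_nonneg _
    have hapos := hα_pos k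
    have hb := (hβ k).le
    have hf := hu k y (hdom hy)
    have hfle : α k * (inner ℝ (y - x k) (u k) : ℝ) ≤ α k * (f y - f (x k)) := by
      apply mul_le_mul_of_nonneg_left _ hapos.le
      have hcomm : (inner ℝ (u k) (y - x k) : ℝ) = (inner ℝ (y - x k) (u k) : ℝ) :=
        real_inner_comm _ _
      linarith [hf]
    have hsubg := hw k (x (k+1)) (hxmem (k+1))
    have hcsw : -(ρ * N) ≤ (inner ℝ (w k) (x (k+1) - x k) : ℝ) := by
      have h1 := abs_real_inner_le_norm (w k) (x (k+1) - x k)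
      have h2 : ‖w k‖ * N ≤ ρ * N := mul_le_mul_of_nonneg_right (hwρ k) hNnn
      have h3 := neg_abs_le (inner ℝ (w k) (x (k+1) - x k) : ℝ)
      linarith
    have hglow : g (x k) - g (x (k+1)) ≤ ρ * N := by linarith
    have hcsu : -(N * ‖u k‖) ≤ (inner ℝ (x (k+1) - x k) (u k) : ℝ) := by
      have h1 := abs_real_inner_le_norm (x (k+1) - x k) (u k)
      have h3 := neg_abs_le (inner ℝ (x (k+1) - x k) (u k) : ℝ)
      linarith
    have hp1 : α k * N ≤ β k * ((ρ+1) * β k) :=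
      mul_le_mul (hα_le k) (hd2 k) hNnn hb
    have hp2 : (α k * ‖u k‖)^2 ≤ (β k)^2 :=
      pow_le_pow_left₀ (by positivity) (hαu k) 2
    have hp3 : α k * (g (x k) - g (x (k+1))) ≤ ρ * (β k * ((ρ+1) * β k)) := by
      have h1 : α k * (g (x k) - g (x (k+1))) ≤ α k * (ρ * N) :=
        mul_le_mul_of_nonneg_left hglow hapos.le
      have h2 : α k * (ρ * N) ≤ ρ * (β k * ((ρ+1)*β k)) := by
        have h3 := mul_le_mul_of_nonneg_left hp1 hρ0
        linarith
      linarith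
    have hru : 0 ≤ ‖u k‖ := norm_nonneg _
    have hAM : -(2 * (α k) * (inner ℝ (x (k+1) - x k) (u k) : ℝ))
        ≤ N^2 + (α k * ‖u k‖)^2 := by
      have h1 : -(2 * (α k) * (inner ℝ (x (k+1) - x k) (u k) : ℝ))
          ≤ 2 * (α k * (N * ‖u k‖)) := by
        have h2 := mul_le_mul_of_nonneg_left hcsu (by linarith : (0:ℝ) ≤ 2 * α k)
        linarith
      linarith [h1, sq_nonneg (N - α k * ‖u k‖)]
    have hrw1 : ‖y - x (k+1)‖^2 = ‖x (k+1) - y‖^2 := by rw [norm_sub_rev]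
    have hrw2 : ‖y - x k‖^2 = ‖x k - y‖^2 := by rw [norm_sub_rev]
    rw [hrw1, hrw2] at h
    rw [hCC]
    linarith [h, hfle, hp2, hp3, hAM]
  -- solution set facts
  have hsol_le : ∀ z ∈ SolSet sg f g, ∀ k, f z + g z ≤ f (x k) + g (x k) :=
    fun z hz k => hz.2 (x k) (hxmem k)
  have hfejer : ∀ z ∈ SolSet sg f g, ∀ k,
      ‖x (k+1) - z‖^2 ≤ ‖x k - z‖^2 + CC * (β k)^2 := by
    intro z hz k
    have h := hmain k z hz.1
    have h2 : 0 ≤ 2*(α k)*((f (x k) + g (x k)) - (f z + g z)) :=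
      mul_nonneg (by linarith [(hα_pos k).le]) (by linarith [hsol_le z hz k])
    linarith
  have hεsum : Summable (fun k => CC * (β k)^2) := hβ2.mul_left CC
  have hnormconv : ∀ z ∈ SolSet sg f g, ∃ L,
      Tendsto (fun k => ‖x k - z‖^2) atTop (nhds L) := by
    intro z hz
    exact (quasi_fejer_aux (fun k => ‖x k - z‖^2) (fun k => CC * (β k)^2) (fun _ => 0)
      (fun k => sq_nonneg _) (fun k => le_rfl) (fun k => by positivity) hεsum
      (fun k => by simpa using hfejer z hz k)).2
  -- objective gap
  set s : ℕ → ℝ := fun k => (f (x k) + g (x k)) - (f xstar + g xstar) with hsdef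
  have hs0 : ∀ k, 0 ≤ s k := fun k => by
    simp only [hsdef, sub_nonneg]
    exact hsol_le xstar hstar k
  have hqf := quasi_fejer_aux (fun k => ‖x k - xstar‖^2) (fun k => CC * (β k)^2)
    (fun k => 2*(α k)*(s k)) (fun k => sq_nonneg _)
    (fun k => mul_nonneg (by linarith [(hα_pos k).le]) (hs0 k))
    (fun k => by positivity) hεsum
    (fun k => by have := hmain k xstar hstar.1; simp only [hsdef]; linarith)
  obtain ⟨hsummable_as, L0, hL0⟩ := hqf
  -- boundedness of the iterates
  obtain ⟨M, hM⟩ := hL0.bddAbove_range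
  have hRbound : ∀ k, ‖x k‖ ≤ Real.sqrt M + ‖xstar‖ := by
    intro k
    have h1 : ‖x k - xstar‖^2 ≤ M := hM ⟨k, rfl⟩
    have h2 : ‖x k - xstar‖ ≤ Real.sqrt M := by
      rw [← Real.sqrt_sq (norm_nonneg (x k - xstar))]
      exact Real.sqrt_le_sqrt h1
    have h3 : ‖x k‖ ≤ ‖x k - xstar‖ + ‖xstar‖ := by
      calc ‖x k‖ = ‖(x k - xstar) + xstar‖ := by rw [sub_add_cancel]
        _ ≤ ‖x k - xstar‖ + ‖xstar‖ := norm_add_le _ _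
    linarith
  set R := Real.sqrt M + ‖xstar‖ with hR
  -- A1 on closure of range
  obtain ⟨ζ, hζ0, hζ⟩ := A1 (closure (Set.range x))
    (closure_minimal (Set.range_subset_iff.2 hxmem) hclg)
    ((isBounded_iff_forall_norm_le.2 ⟨R, by rintro _ ⟨k, rfl⟩; exact hRbound k⟩).closure)
    isClosed_closure
  have hub : ∀ k, ‖u k‖ ≤ ζ := fun k =>
    hζ (x k) (subset_closure ⟨k, rfl⟩) (u k) (hu k)
  have hβα : ∀ k, β k ≤ max 1 ζ * α k := by
    intro k
    have h1 : max 1 ‖u k‖ * α k = β k := by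
      rw [hα]
      field_simp
    rw [← h1]
    exact mul_le_mul_of_nonneg_right (max_le_max le_rfl (hub k)) (hα_pos k).le
  have hsummable_βs : Summable (fun k => β k * s k) := by
    have h1 : Summable (fun k => α k * s k) := by
      have h0 := hsummable_as.mul_left (1/2)
      have he : (fun k => (1/2) * (2*(α k)*(s k))) = fun k => α k * s k := by
        funext k; ring
      rwa [he] at h0
    have h2 := h1.mul_left (max 1 ζ)
    apply Summable.of_nonneg_of_le (fun k => mul_nonneg (hβ k).le (hs0 k)) _ h2
    intro k
    calc β k * s k ≤ (max 1 ζ * α k) * s k :=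
          mul_le_mul_of_nonneg_right (hβα k) (hs0 k)
      _ = max 1 ζ * (α k * s k) := by ring
  -- increments of s
  have hsinc : ∀ k, s (k+1) ≤ s k + ((ζ+ρ)*(ρ+1)) * β k := by
    intro k
    set N := ‖x (k+1) - x k‖ with hN
    have hNnn : 0 ≤ N := norm_nonneg _
    have hfh := hu (k+1) (x k) (hdom (hxmem k))
    have hgh := hw (k+1) (x k) (hxmem k)
    have hcs1 : -(ζ * N) ≤ (inner ℝ (u (k+1)) (x k - x (k+1)) : ℝ) := by
      have h1 := abs_real_inner_le_norm (u (k+1)) (x k - x (k+1))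
      have h2 : ‖x k - x (k+1)‖ = N := norm_sub_rev _ _
      have h3 : ‖u (k+1)‖ * ‖x k - x (k+1)‖ ≤ ζ * N := by
        rw [h2]
        exact mul_le_mul_of_nonneg_right (hub (k+1)) hNnn
      have h4 := neg_abs_le (inner ℝ (u (k+1)) (x k - x (k+1)) : ℝ)
      linarith
    have hcs2 : -(ρ * N) ≤ (inner ℝ (w (k+1)) (x k - x (k+1)) : ℝ) := by
      have h1 := abs_real_inner_le_norm (w (k+1)) (x k - x (k+1))
      have h2 : ‖x k - x (k+1)‖ = N := norm_sub_rev _ _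
      have h3 : ‖w (k+1)‖ * ‖x k - x (k+1)‖ ≤ ρ * N := by
        rw [h2]
        exact mul_le_mul_of_nonneg_right (hwρ (k+1)) hNnn
      have h4 := neg_abs_le (inner ℝ (w (k+1)) (x k - x (k+1)) : ℝ)
      linarith
    have hNd := hd2 k
    have hζρ : 0 ≤ ζ + ρ := by linarith
    simp only [hsdef]
    have hN1 : (ζ + ρ) * N ≤ (ζ+ρ)*((ρ+1)*β k) := mul_le_mul_of_nonneg_left hNd hζρ
    linarith
  -- β tends to zero
  have hβ0 : Tendsto β atTop (nhds 0) := by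
    have h1 : Tendsto (fun k => (β k)^2) atTop (nhds 0) := hβ2.tendsto_atTop_zero
    have h2 : Tendsto (fun k => Real.sqrt ((β k)^2)) atTop (nhds (Real.sqrt 0)) :=
      (Real.continuous_sqrt.tendsto 0).comp h1
    have he : (fun k => Real.sqrt ((β k)^2)) = β := by
      funext k
      exact Real.sqrt_sq (hβ k).le
    rw [he] at h2
    simpa using h2
  -- s tends to zero
  have hszero : Tendsto s atTop (nhds 0) :=
    seq_to_zero s β ((ζ+ρ)*(ρ+1)) (by nlinarith [hζ0, hρ0]) hs0 hβ hβ0 hβdiv hsummable_βs hsinc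
  have part1 : Tendsto (fun k => f (x k) + g (x k)) atTop (nhds (f xstar + g xstar)) := by
    have h0 := hszero.add_const (f xstar + g xstar)
    simp only [hsdef, zero_add, sub_add_cancel] at h0
    exact h0
  refine ⟨part1, ?_⟩
  -- closed convex sublevel sets
  have hFlsc : ∀ z ∈ sg, LowerSemicontinuousWithinAt (fun y => f y + g y) sg z :=
    fun z hz => LowerSemicontinuousWithinAt.add ((hlscf z (hdom hz)).mono hdom) (hlscg z hz)
  have hsub_closed : ∀ r : ℝ, IsClosed {y ∈ sg | f y + g y ≤ r} := by
    intro r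
    apply isClosed_of_closure_subset
    intro z hzcl
    have hCs : {y ∈ sg | f y + g y ≤ r} ⊆ sg := fun y hy => hy.1
    have hzsg : z ∈ sg := closure_minimal hCs hclg hzcl
    refine ⟨hzsg, ?_⟩
    by_contra hgt
    push_neg at hgt
    have hev := hFlsc z hzsg r hgt
    have hev' : ∀ᶠ y in nhdsWithin z {y ∈ sg | f y + g y ≤ r}, r < f y + g y :=
      hev.filter_mono (nhdsWithin_mono z hCs)
    have hmem : ∀ᶠ y in nhdsWithin z {y ∈ sg | f y + g y ≤ r},
        y ∈ {y ∈ sg | f y + g y ≤ r} := self_mem_nhdsWithin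
    have hNB : (nhdsWithin z {y ∈ sg | f y + g y ≤ r}).NeBot :=
      mem_closure_iff_nhdsWithin_neBot.1 hzcl
    obtain ⟨y, hy1, hy2⟩ := (hev'.and hmem).exists
    exact absurd hy2.2 (not_le.2 hy1)
  -- construction of a weak limit along an ultrafilter
  have construct : ∀ U : Ultrafilter ℕ, (↑U : Filter ℕ) ≤ atTop →
      ∃ p, p ∈ SolSet sg f g ∧ ∀ y : H,
        Tendsto (fun k => (inner ℝ (x k) y : ℝ)) (↑U) (nhds (inner ℝ p y : ℝ)) := by
    intro U hUle
    have hRy : ∀ y : H, ∀ k, (inner ℝ (x k) y : ℝ) ∈ Set.Icc (-(R*‖y‖)) (R*‖y‖) := by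
      intro y k
      have h1 := abs_real_inner_le_norm (x k) y
      have h2 : ‖x k‖ * ‖y‖ ≤ R * ‖y‖ :=
        mul_le_mul_of_nonneg_right (hRbound k) (norm_nonneg y)
      have h3 := abs_le.1 (le_trans h1 h2)
      exact ⟨h3.1, h3.2⟩
    have hex : ∀ y : H, ∃ c : ℝ, Tendsto (fun k => (inner ℝ (x k) y : ℝ)) (↑U) (nhds c) := by
      intro y
      obtain ⟨c, _, hle⟩ := (isCompact_Icc (a := -(R*‖y‖)) (b := R*‖y‖)).ultrafilter_le_nhds
        (U.map (fun k => (inner ℝ (x k) y : ℝ)))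
        (by rw [Ultrafilter.coe_map, le_principal_iff, Filter.mem_map]
            exact Filter.univ_mem' (fun k => hRy y k))
      refine ⟨c, ?_⟩
      rwa [Ultrafilter.coe_map] at hle
    choose Φ hΦ using hex
    have hadd : ∀ y y' : H, Φ (y + y') = Φ y + Φ y' := by
      intro y y'
      have h1 : Tendsto (fun k => (inner ℝ (x k) (y + y') : ℝ)) (↑U) (nhds (Φ y + Φ y')) := by
        have h2 := (hΦ y).add (hΦ y')
        simpa [inner_add_right] using h2
      exact tendsto_nhds_unique (hΦ _) h1
    have hsmul : ∀ (r : ℝ) (y : H), Φ (r • y) = r * Φ y := by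
      intro r y
      have h1 : Tendsto (fun k => (inner ℝ (x k) (r • y) : ℝ)) (↑U) (nhds (r * Φ y)) := by
        have h2 := (hΦ y).const_mul r
        simpa [real_inner_smul_right, mul_comm] using h2
      exact tendsto_nhds_unique (hΦ _) h1
    have hbnd : ∀ y : H, |Φ y| ≤ R * ‖y‖ := by
      intro y
      have h1 : Tendsto (fun k => |(inner ℝ (x k) y : ℝ)|) (↑U) (nhds |Φ y|) := (hΦ y).abs
      exact le_of_tendsto h1 (Filter.Eventually.of_forall (fun k => abs_le.2 (hRy y k)))
    set Lm : H →ₗ[ℝ] ℝ :=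
      { toFun := Φ, map_add' := hadd,
        map_smul' := fun r y => by rw [RingHom.id_apply, smul_eq_mul]; exact hsmul r y }
      with hLm
    set Lc : H →L[ℝ] ℝ := LinearMap.mkContinuous Lm R (fun y => by
      simp only [hLm, LinearMap.coe_mk, AddHom.coe_mk, Real.norm_eq_abs]
      exact hbnd y) with hLc
    set p := (InnerProductSpace.toDual ℝ H).symm Lc with hp
    have hpy : ∀ y : H, (inner ℝ p y : ℝ) = Φ y := by
      intro y
      have h1 : (InnerProductSpace.toDual ℝ H) p = Lc := by
        rw [hp]; exact LinearIsometryEquiv.apply_symm_apply _ _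
      calc (inner ℝ p y : ℝ) = ((InnerProductSpace.toDual ℝ H) p) y :=
            (InnerProductSpace.toDual_apply_apply).symm
        _ = Lc y := by rw [h1]
        _ = Φ y := rfl
    have hplim : ∀ y : H, Tendsto (fun k => (inner ℝ (x k) y : ℝ)) (↑U) (nhds (inner ℝ p y : ℝ)) := by
      intro y
      rw [hpy y]
      exact hΦ y
    have hweak : ∀ C : Set H, Convex ℝ C → IsClosed C →
        (∀ᶠ k in (↑U : Filter ℕ), x k ∈ C) → p ∈ C := by
      intro C hCc hCcl hCev
      by_contra hpC
      obtain ⟨φ, r, hφC, hφp⟩ := geometric_hahn_banach_closed_point hCc hCcl hpC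
      set v := (InnerProductSpace.toDual ℝ H).symm φ with hv
      have hvz : ∀ z : H, φ z = (inner ℝ v z : ℝ) := by
        intro z
        have h1 : (InnerProductSpace.toDual ℝ H) v = φ := by
          rw [hv]; exact LinearIsometryEquiv.apply_symm_apply _ _
        rw [← h1]
        exact InnerProductSpace.toDual_apply_apply
      have hle : (inner ℝ p v : ℝ) ≤ r := by
        apply le_of_tendsto (hplim v)
        filter_upwards [hCev] with k hk
        have h2 := hφC (x k) hk
        rw [hvz (x k)] at h2
        rw [real_inner_comm]
        exact h2.le
      rw [hvz p, real_inner_comm p v] at hφp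
      linarith
    have hpsg : p ∈ sg := hweak sg hconvg.1 hclg (Filter.Eventually.of_forall hxmem)
    have hpmin : f p + g p ≤ f xstar + g xstar := by
      apply le_of_forall_pos_le_add
      intro ε hε
      have hCc : Convex ℝ {y ∈ sg | f y + g y ≤ (f xstar + g xstar) + ε} := by
        have h1 : ConvexOn ℝ sg (fun y => f y + g y) :=
          (hconvf.subset hdom hconvg.1).add hconvg
        exact h1.convex_le _
      have hCev : ∀ᶠ k in (↑U : Filter ℕ), x k ∈ {y ∈ sg | f y + g y ≤ (f xstar + g xstar) + ε} := by
        apply Filter.Eventually.filter_mono hUle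
        have h1 : ∀ᶠ k in atTop, f (x k) + g (x k) ≤ (f xstar + g xstar) + ε :=
          part1.eventually (eventually_le_nhds (by linarith))
        filter_upwards [h1] with k hk
        exact ⟨hxmem k, hk⟩
      exact (hweak _ hCc (hsub_closed _) hCev).2
    exact ⟨p, ⟨hpsg, fun y hy => le_trans hpmin (hstar.2 y hy)⟩, hplim⟩
  -- conclude: full weak convergence via Opial-type argument
  obtain ⟨p, hpS, hplim⟩ := construct (Ultrafilter.of atTop) (Ultrafilter.of_le _)
  refine ⟨p, hpS, ?_⟩
  intro y
  by_contra hcon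
  rw [Metric.tendsto_atTop] at hcon
  push_neg at hcon
  obtain ⟨ε, hε, hfreq⟩ := hcon
  have hfreq' : ∃ᶠ k in atTop, ε ≤ dist ((inner ℝ (x k) y : ℝ)) ((inner ℝ p y : ℝ)) :=
    frequently_atTop.2 (fun N => (hfreq N).imp (fun n hn => ⟨hn.1, hn.2⟩))
  have hNB : (atTop ⊓ 𝓟 {k | ε ≤ dist ((inner ℝ (x k) y : ℝ)) ((inner ℝ p y : ℝ))}).NeBot :=
    frequently_iff_neBot.1 hfreq'
  set U' := Ultrafilter.of (atTop ⊓ 𝓟 {k | ε ≤ dist ((inner ℝ (x k) y : ℝ)) ((inner ℝ p y : ℝ))})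
    with hU'
  have hU'le : (↑U' : Filter ℕ) ≤ atTop := le_trans (Ultrafilter.of_le _) inf_le_left
  have hU'mem : ∀ᶠ k in (↑U' : Filter ℕ),
      ε ≤ dist ((inner ℝ (x k) y : ℝ)) ((inner ℝ p y : ℝ)) := by
    have h1 : {k | ε ≤ dist ((inner ℝ (x k) y : ℝ)) ((inner ℝ p y : ℝ))}
        ∈ (atTop ⊓ 𝓟 {k | ε ≤ dist ((inner ℝ (x k) y : ℝ)) ((inner ℝ p y : ℝ))}) :=
      mem_inf_of_right (mem_principal_self _)
    exact (Ultrafilter.of_le _) h1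
  obtain ⟨p', hp'S, hp'lim⟩ := construct U' hU'le
  have hdistp : ε ≤ dist ((inner ℝ p' y : ℝ)) ((inner ℝ p y : ℝ)) := by
    have h1 : Tendsto (fun k => dist ((inner ℝ (x k) y : ℝ)) ((inner ℝ p y : ℝ))) (↑U')
        (nhds (dist ((inner ℝ p' y : ℝ)) ((inner ℝ p y : ℝ)))) :=
      (hp'lim y).dist tendsto_const_nhds
    exact ge_of_tendsto h1 hU'mem
  obtain ⟨Lp, hLp⟩ := hnormconv p hpS
  obtain ⟨Lp', hLp'⟩ := hnormconv p' hp'S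
  have hid : ∀ k, (inner ℝ (x k) (p - p') : ℝ)
      = (‖x k - p'‖^2 - ‖x k - p‖^2 + ‖p‖^2 - ‖p'‖^2)/2 := by
    intro k
    have e1 := norm_sub_sq_real (x k) p
    have e2 := norm_sub_sq_real (x k) p'
    have e3 : (inner ℝ (x k) (p - p') : ℝ)
        = (inner ℝ (x k) p : ℝ) - (inner ℝ (x k) p' : ℝ) := inner_sub_right _ _ _
    linarith
  have hq : Tendsto (fun k => (inner ℝ (x k) (p - p') : ℝ)) atTop
      (nhds ((Lp' - Lp + ‖p‖^2 - ‖p'‖^2)/2)) := by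
    have he : (fun k => (inner ℝ (x k) (p - p') : ℝ))
        = fun k => (‖x k - p'‖^2 - ‖x k - p‖^2 + ‖p‖^2 - ‖p'‖^2)/2 := funext hid
    rw [he]
    exact (((hLp'.sub hLp).add_const (‖p‖^2)).sub_const (‖p'‖^2)).div_const 2
  have hc1 : (inner ℝ p (p - p') : ℝ) = (Lp' - Lp + ‖p‖^2 - ‖p'‖^2)/2 :=
    tendsto_nhds_unique (hplim (p - p')) (hq.mono_left (Ultrafilter.of_le atTop))
  have hc2 : (inner ℝ p' (p - p') : ℝ) = (Lp' - Lp + ‖p‖^2 - ‖p'‖^2)/2 :=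
    tendsto_nhds_unique (hp'lim (p - p')) (hq.mono_left hU'le)
  have hpp : p = p' := by
    have h1 : (inner ℝ (p - p') (p - p') : ℝ) = 0 := by
      rw [inner_sub_left, hc1, hc2]
      ring
    have h2 : p - p' = 0 := inner_self_eq_zero.1 h1
    exact sub_eq_zero.1 h2
  rw [hpp] at hdistp
  rw [dist_self] at hdistp
  linarith
end

section
/- Let (x^k) be generated by the proximal subgradient splitting method with exogenous stepsizes satisfying Σβ_k² < ∞ and Σβ_k = ∞, under A1 and A2. Then liminf_{k→∞} (f+g)(x^k) = inf_{x∈H} (f+g)(x) (possibly −∞). -/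
open Filter Metric Finset Bornology
open scoped RealInnerProductSpace Topology

/-- The prox map gives a subgradient-type inequality. -/
lemma prox_subgrad_ineq {H : Type*} [NormedAddCommGroup H] [InnerProductSpace ℝ H]
    {s : Set H} {g : H → ℝ} {α : ℝ} {z p : H} (hα : 0 < α)
    (hconv : ConvexOn ℝ s g) (hp : IsProxPt s g α z p) :
    ∀ y ∈ s, (inner ℝ (z - p) (y - p) : ℝ) ≤ α * (g y - g p) := by
  intro y hy
  have key : ∀ t : ℝ, 0 < t → t ≤ 1 →
      (inner ℝ (z - p) (y - p) : ℝ) ≤ α * (g y - g p) + (t/2) * ‖y - p‖^2 := by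
    intro t ht ht1
    have hmem : p + t • (y - p) ∈ s := by
      have := hconv.1 hp.1 hy (by linarith : (0:ℝ) ≤ 1 - t) ht.le (by ring)
      convert this using 1
      module
    have hg : g (p + t • (y - p)) ≤ (1 - t) * g p + t * g y := by
      have := hconv.2 hp.1 hy (by linarith : (0:ℝ) ≤ 1 - t) ht.le (by ring)
      have he : (1 - t) • p + t • y = p + t • (y - p) := by module
      rw [he] at this
      exact this
    have hprox := hp.2 _ hmem
    have hexp : ‖p + t • (y - p) - z‖^2
        = ‖p - z‖^2 + 2 * (t * (inner ℝ (p - z) (y - p) : ℝ)) + t^2 * ‖y - p‖^2 := by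
      have he : p + t • (y - p) - z = (p - z) + t • (y - p) := by module
      rw [he, norm_add_sq_real, real_inner_smul_right, norm_smul, mul_pow,
        Real.norm_eq_abs, sq_abs]
    rw [hexp] at hprox
    have hstep1 : t * (g p - g y) ≤ (1/(2*α)) * (2 * (t * (inner ℝ (p - z) (y - p) : ℝ))
        + t^2 * ‖y - p‖^2) := by
      have hx : (1/(2*α)) * (‖p - z‖^2 + 2 * (t * (inner ℝ (p - z) (y - p) : ℝ))
          + t^2 * ‖y - p‖^2) = (1/(2*α)) * ‖p - z‖^2
          + (1/(2*α)) * (2 * (t * (inner ℝ (p - z) (y - p) : ℝ)) + t^2 * ‖y - p‖^2) := by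
        ring
      rw [hx] at hprox
      linarith
    have hmul : (2*α) * ((1/(2*α)) * (2 * (t * (inner ℝ (p - z) (y - p) : ℝ))
        + t^2 * ‖y - p‖^2)) = 2 * (t * (inner ℝ (p - z) (y - p) : ℝ)) + t^2 * ‖y - p‖^2 := by
      field_simp
    have hstep2 : (2*α) * (t * (g p - g y)) ≤ 2 * (t * (inner ℝ (p - z) (y - p) : ℝ))
        + t^2 * ‖y - p‖^2 := by
      have h := mul_le_mul_of_nonneg_left hstep1 (by linarith : (0:ℝ) ≤ 2*α)
      rw [hmul] at h
      exact h
    have hI : (inner ℝ (z - p) (y - p) : ℝ) = -(inner ℝ (p - z) (y - p) : ℝ) := by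
      rw [show z - p = -(p - z) by abel, inner_neg_left]
    rw [hI]
    by_contra hneg
    push_neg at hneg
    have hpos2 : 0 < t * (2*α*(g p - g y) - 2*(inner ℝ (p - z) (y - p) : ℝ)
        - t*‖y - p‖^2) := mul_pos ht (by nlinarith)
    nlinarith [hstep2, hpos2]
  refine le_of_forall_pos_le_add ?_
  intro ε hε
  have hQ0 : 0 ≤ ‖y - p‖^2 := sq_nonneg _
  have ht0 : 0 < min 1 (ε / (‖y - p‖^2 + 1)) := lt_min one_pos (div_pos hε (by linarith))
  have hk := key _ ht0 (min_le_left _ _)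
  have hle : (min 1 (ε / (‖y - p‖^2 + 1)) / 2) * ‖y - p‖^2 ≤ ε := by
    have h1 : min 1 (ε / (‖y - p‖^2 + 1)) ≤ ε / (‖y - p‖^2 + 1) := min_le_right _ _
    have h2 : (ε / (‖y - p‖^2 + 1)) * ‖y - p‖^2 ≤ ε := by
      rw [div_mul_eq_mul_div, div_le_iff₀ (by linarith : (0:ℝ) < ‖y - p‖^2 + 1)]
      nlinarith
    nlinarith
  linarith

lemma norm_sq_ident {H : Type*} [NormedAddCommGroup H] [InnerProductSpace ℝ H]
    (z p y : H) :
    ‖p - y‖^2 = ‖z - y‖^2 - ‖z - p‖^2 - 2 * (inner ℝ (z - p) (p - y) : ℝ) := by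
  have h := norm_add_sq_real (z - p) (p - y)
  rw [show (z - p) + (p - y) = z - y by abel] at h
  linarith

set_option maxHeartbeats 1000000 in
theorem pss_exogenous_liminf_inf
    {H : Type*} [NormedAddCommGroup H] [InnerProductSpace ℝ H] [CompleteSpace H]
    (sf sg : Set H) (f g : H → ℝ)
    (hconvf : ConvexOn ℝ sf f) (hconvg : ConvexOn ℝ sg g)
    (hlscf : LowerSemicontinuousOn f sf) (hlscg : LowerSemicontinuousOn g sg)
    (hclg : IsClosed sg) (hdom : sg ⊆ sf) (hneg : sg.Nonempty)
    (A1 : ∀ V : Set H, V ⊆ sg → Bornology.IsBounded V → IsClosed V →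
      ∃ ζ > 0, ∀ z ∈ V, ∀ uu : H, HasSubgradAt sf f uu z → ‖uu‖ ≤ ζ)
    (A2 : ∃ ρ ≥ (0:ℝ), ∀ z ∈ sg, ∃ ww : H, HasSubgradAt sg g ww z ∧ ‖ww‖ ≤ ρ)
    (x u : ℕ → H) (β : ℕ → ℝ) (hβ : ∀ k, 0 < β k)
    (hβ2 : Summable (fun k => (β k)^2))
    (hβdiv : Filter.Tendsto (fun n => ∑ i ∈ Finset.range n, β i) Filter.atTop Filter.atTop)
    (hx0 : x 0 ∈ sg)
    (hu : ∀ k, HasSubgradAt sf f (u k) (x k))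
    (hstep : ∀ k, IsProxPt sg g (β k / max 1 ‖u k‖)
      (x k - (β k / max 1 ‖u k‖) • u k) (x (k+1))) :
    Filter.liminf (fun k => ((f (x k) + g (x k) : ℝ) : EReal)) Filter.atTop
      = ⨅ y ∈ sg, ((f y + g y : ℝ) : EReal) := by
  obtain ⟨ρ, hρ0, hA2⟩ := A2
  set α : ℕ → ℝ := fun k => β k / max 1 ‖u k‖ with hα
  have hmax1 : ∀ k, (1:ℝ) ≤ max 1 ‖u k‖ := fun k => le_max_left _ _
  have hαpos : ∀ k, 0 < α k := fun k => div_pos (hβ k) (lt_of_lt_of_le one_pos (hmax1 k))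
  have hαβ : ∀ k, α k ≤ β k := fun k => div_le_self (hβ k).le (hmax1 k)
  have hαu : ∀ k, α k * ‖u k‖ ≤ β k := by
    intro k
    simp only [hα]
    rw [div_mul_eq_mul_div, div_le_iff₀ (lt_of_lt_of_le one_pos (hmax1 k))]
    exact mul_le_mul_of_nonneg_left (le_max_right _ _) (hβ k).le
  have hxmem : ∀ k, x k ∈ sg := by
    intro k
    cases k with
    | zero => exact hx0
    | succ n => exact (hstep n).1
  have gdiff : ∀ v w : H, v ∈ sg → w ∈ sg → g v - g w ≤ ρ * ‖v - w‖ := by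
    intro v w hv hw
    obtain ⟨wv, hwv, hwvn⟩ := hA2 v hv
    have h1 := hwv w hw
    have h2 : (inner ℝ wv (v - w) : ℝ) ≤ ρ * ‖v - w‖ :=
      le_trans (real_inner_le_norm _ _)
        (mul_le_mul_of_nonneg_right hwvn (norm_nonneg _))
    have h3 : (inner ℝ wv (w - v) : ℝ) = -(inner ℝ wv (v - w) : ℝ) := by
      rw [show w - v = -(v - w) by abel, inner_neg_right]
    linarith
  set C : ℝ := 1 + 2*ρ + 2*ρ^2 with hC
  have hC0 : 0 ≤ C := by nlinarith
  -- master inequality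
  have key : ∀ k, ∀ y' ∈ sg, ‖x (k+1) - y'‖^2 ≤ ‖x k - y'‖^2
      - 2 * α k * ((f (x k) + g (x k)) - (f y' + g y')) + C * (β k)^2 := by
    intro k y' hy'
    have hpmem : x (k+1) ∈ sg := (hstep k).1
    have hsub := prox_subgrad_ineq (hαpos k) hconvg (hstep k)
    set a := α k with ha
    have ha0 : (0:ℝ) < a := hαpos k
    have hau : a * ‖u k‖ ≤ β k := hαu k
    have haβ : a ≤ β k := hαβ k
    set z := x k - a • u k with hz
    have h1 : (inner ℝ (z - x (k+1)) (y' - x (k+1)) : ℝ) ≤ a * (g y' - g (x (k+1))) :=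
      hsub y' hy'
    have h1x : (inner ℝ (z - x (k+1)) (x k - x (k+1)) : ℝ)
        ≤ a * (g (x k) - g (x (k+1))) := hsub (x k) (hxmem k)
    -- step-length bound
    have hstepn : ‖x k - x (k+1)‖ ≤ a * (‖u k‖ + ρ) := by
      have hzp : z - x (k+1) = (x k - x (k+1)) - a • u k := by rw [hz]; module
      have hexp : (inner ℝ (z - x (k+1)) (x k - x (k+1)) : ℝ)
          = ‖x k - x (k+1)‖^2 - a * (inner ℝ (u k) (x k - x (k+1)) : ℝ) := by
        rw [hzp, inner_sub_left, real_inner_smul_left, real_inner_self_eq_norm_sq]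
      have hics : (inner ℝ (u k) (x k - x (k+1)) : ℝ) ≤ ‖u k‖ * ‖x k - x (k+1)‖ :=
        real_inner_le_norm _ _
      have hgd : g (x k) - g (x (k+1)) ≤ ρ * ‖x k - x (k+1)‖ :=
        gdiff _ _ (hxmem k) hpmem
      have h4 : a * (inner ℝ (u k) (x k - x (k+1)) : ℝ) ≤ a * (‖u k‖ * ‖x k - x (k+1)‖) :=
        mul_le_mul_of_nonneg_left hics ha0.le
      have h5 : a * (g (x k) - g (x (k+1))) ≤ a * (ρ * ‖x k - x (k+1)‖) :=
        mul_le_mul_of_nonneg_left hgd ha0.le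
      have hsq : ‖x k - x (k+1)‖^2 ≤ (a * (‖u k‖ + ρ)) * ‖x k - x (k+1)‖ := by
        nlinarith [hexp, h1x, h4, h5]
      rcases (norm_nonneg (x k - x (k+1))).eq_or_lt with h0 | h0
      · rw [← h0]
        exact mul_nonneg ha0.le (add_nonneg (norm_nonneg _) hρ0)
      · exact le_of_mul_le_mul_right (by nlinarith [hsq]) h0
    have idA := norm_sq_ident z (x (k+1)) y'
    have idB : ‖z - y'‖^2 = ‖x k - y'‖^2 - 2 * (a * (inner ℝ (u k) (x k - y') : ℝ))
        + a^2 * ‖u k‖^2 := by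
      have he : z - y' = (x k - y') - a • u k := by rw [hz]; module
      rw [he, norm_sub_sq_real, real_inner_smul_right, norm_smul, mul_pow,
        Real.norm_eq_abs, sq_abs, real_inner_comm]
    have hf' := hu k y' (hdom hy')
    have hfneg : (inner ℝ (u k) (y' - x k) : ℝ) = -(inner ℝ (u k) (x k - y') : ℝ) := by
      rw [show y' - x k = -(x k - y') by abel, inner_neg_right]
    have F3 : f (x k) - f y' ≤ (inner ℝ (u k) (x k - y') : ℝ) := by linarith
    have F4 : (inner ℝ (z - x (k+1)) (y' - x (k+1)) : ℝ)
        = -(inner ℝ (z - x (k+1)) (x (k+1) - y') : ℝ) := by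
      rw [show y' - x (k+1) = -(x (k+1) - y') by abel, inner_neg_right]
    have hgxk : g (x k) - g (x (k+1)) ≤ ρ * (a * (‖u k‖ + ρ)) := by
      have h6 := gdiff (x k) (x (k+1)) (hxmem k) hpmem
      have h7 := mul_le_mul_of_nonneg_left hstepn hρ0
      linarith
    -- products bounds
    have hau0 : 0 ≤ a * ‖u k‖ := mul_nonneg ha0.le (norm_nonneg _)
    have e1 : a^2 * ‖u k‖^2 ≤ (β k)^2 := by
      calc a^2 * ‖u k‖^2 = (a * ‖u k‖) * (a * ‖u k‖) := by ring
        _ ≤ β k * β k := mul_le_mul hau hau hau0 (hβ k).le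
        _ = (β k)^2 := (sq (β k)).symm
    have e2 : a * (a * ‖u k‖) ≤ (β k)^2 := by
      calc a * (a * ‖u k‖) ≤ β k * β k := mul_le_mul haβ hau hau0 (hβ k).le
        _ = (β k)^2 := (sq (β k)).symm
    have e3 : a^2 ≤ (β k)^2 := by
      calc a^2 = a * a := sq a
        _ ≤ β k * β k := mul_le_mul haβ haβ ha0.le (hβ k).le
        _ = (β k)^2 := (sq (β k)).symm
    have F3' : 2 * a * (f (x k) - f y') ≤ 2 * a * (inner ℝ (u k) (x k - y') : ℝ) :=
      mul_le_mul_of_nonneg_left F3 (by linarith)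
    have F5' : 2 * a * (g (x k) - g (x (k+1))) ≤ 2 * a * (ρ * (a * (‖u k‖ + ρ))) :=
      mul_le_mul_of_nonneg_left hgxk (by linarith)
    have F4' : 2 * (inner ℝ (z - x (k+1)) (y' - x (k+1)) : ℝ)
        ≤ 2 * (a * (g y' - g (x (k+1)))) := by linarith
    have hznn : 0 ≤ ‖z - x (k+1)‖^2 := sq_nonneg _
    have t1 : 2*ρ*(a*(a*‖u k‖)) ≤ 2*ρ*(β k)^2 :=
      mul_le_mul_of_nonneg_left e2 (by linarith)
    have t2 : 2*ρ^2*a^2 ≤ 2*ρ^2*(β k)^2 :=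
      mul_le_mul_of_nonneg_left e3 (by positivity)
    rw [hC]
    linarith [idA, idB, F3', F4, F4', F5', hznn, e1, t1, t2]
  -- Part 1 : inf ≤ liminf
  have part1 : (⨅ y ∈ sg, ((f y + g y : ℝ) : EReal))
      ≤ Filter.liminf (fun k => ((f (x k) + g (x k) : ℝ) : EReal)) Filter.atTop := by
    refine le_liminf_of_le (by isBoundedDefault) (Eventually.of_forall ?_)
    intro k
    exact iInf₂_le (x k) (hxmem k)
  refine le_antisymm ?_ part1
  by_contra hlt
  push_neg at hlt
  obtain ⟨c, hc1, hc2⟩ := EReal.exists_between_coe_real hlt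
  -- y with value < c
  have hy' : ∃ y ∈ sg, ((f y + g y : ℝ) : EReal) < (c : EReal) := by
    by_contra hcon
    push_neg at hcon
    exact absurd (le_iInf₂ hcon) (not_le.2 hc1)
  obtain ⟨y, hy, hyc⟩ := hy'
  have hyc' : f y + g y < c := EReal.coe_lt_coe_iff.1 hyc
  have hev := eventually_lt_of_lt_liminf hc2
  obtain ⟨N, hN⟩ := eventually_atTop.1 hev
  have hvk : ∀ k, N ≤ k → c < f (x k) + g (x k) :=
    fun k hk => EReal.coe_lt_coe_iff.1 (hN k hk)
  set δ : ℝ := c - (f y + g y) with hδ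
  have hδ0 : 0 < δ := by rw [hδ]; linarith
  set B : ℝ := ∑' k, (β k)^2 with hB
  have hB0 : 0 ≤ B := tsum_nonneg (fun k => sq_nonneg _)
  have hIcoB : ∀ N' n : ℕ, ∑ i ∈ Finset.Ico N' n, (β i)^2 ≤ B :=
    fun N' n => Summable.sum_le_tsum _ (fun i _ => sq_nonneg _) hβ2
  -- stage 1 : boundedness
  have hstep2 : ∀ k, N ≤ k → ‖x (k+1) - y‖^2 ≤ ‖x k - y‖^2 + C * (β k)^2 := by
    intro k hk
    have h := key k y hy
    have hfg : 0 ≤ (f (x k) + g (x k)) - (f y + g y) := by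
      have := hvk k hk
      linarith
    have hpos : 0 ≤ 2 * α k * ((f (x k) + g (x k)) - (f y + g y)) :=
      mul_nonneg (by linarith [(hαpos k).le]) hfg
    linarith
  have stage1 : ∀ n, N ≤ n →
      ‖x n - y‖^2 ≤ ‖x N - y‖^2 + C * ∑ i ∈ Finset.Ico N n, (β i)^2 := by
    intro n hn
    induction n, hn using Nat.le_induction with
    | base => simp
    | succ n hn ih =>
      rw [Finset.sum_Ico_succ_top hn]
      have h := hstep2 n hn
      have hd : C * (∑ i ∈ Finset.Ico N n, (β i)^2 + (β n)^2)
          = C * ∑ i ∈ Finset.Ico N n, (β i)^2 + C * (β n)^2 := by ring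
      rw [hd]
      linarith
  set M1 : ℝ := ((Finset.range (N+1)).sup' (by simp) fun k => ‖x k - y‖^2) with hM1
  set M : ℝ := M1 + C * B with hM
  have hCB : 0 ≤ C * B := mul_nonneg hC0 hB0
  have hbound : ∀ k, ‖x k - y‖^2 ≤ M := by
    intro k
    rcases le_or_gt k N with hk | hk
    · have h1 : ‖x k - y‖^2 ≤ M1 :=
        Finset.le_sup' (f := fun k => ‖x k - y‖^2) (Finset.mem_range.2 (by omega))
      rw [hM]
      linarith
    · have h1 := stage1 k hk.le
      have h2 : C * ∑ i ∈ Finset.Ico N k, (β i)^2 ≤ C * B :=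
        mul_le_mul_of_nonneg_left (hIcoB N k) hC0
      have h3 : ‖x N - y‖^2 ≤ M1 :=
        Finset.le_sup' (f := fun k => ‖x k - y‖^2) (Finset.mem_range.2 (by omega))
      rw [hM]
      linarith
  have hM0 : 0 ≤ M := le_trans (sq_nonneg _) (hbound 0)
  set R : ℝ := Real.sqrt M with hR
  have hball : ∀ k, x k ∈ Metric.closedBall y R := by
    intro k
    rw [Metric.mem_closedBall, dist_eq_norm]
    exact (Real.le_sqrt (norm_nonneg _) hM0).2 (hbound k)
  -- get ζ from A1
  obtain ⟨ζ, hζ0, hζ⟩ := A1 (sg ∩ Metric.closedBall y R) Set.inter_subset_left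
    (Metric.isBounded_closedBall.subset Set.inter_subset_right)
    (hclg.inter Metric.isClosed_closedBall)
  have hub : ∀ k, ‖u k‖ ≤ ζ := fun k => hζ (x k) ⟨hxmem k, hball k⟩ (u k) (hu k)
  set M2 : ℝ := max 1 ζ with hM2
  have hM2pos : 0 < M2 := lt_of_lt_of_le one_pos (le_max_left _ _)
  have hαlb : ∀ k, β k / M2 ≤ α k := by
    intro k
    simp only [hα]
    have h1 : max 1 ‖u k‖ ≤ M2 := max_le_max le_rfl (hub k)
    exact div_le_div_of_nonneg_left (hβ k).le (lt_of_lt_of_le one_pos (hmax1 k)) h1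
  -- stage 2
  have stage2 : ∀ n, N ≤ n → ‖x n - y‖^2 ≤ ‖x N - y‖^2
      - (2*δ/M2) * ∑ i ∈ Finset.Ico N n, β i + C * ∑ i ∈ Finset.Ico N n, (β i)^2 := by
    intro n hn
    induction n, hn using Nat.le_induction with
    | base => simp
    | succ n hn ih =>
      rw [Finset.sum_Ico_succ_top hn, Finset.sum_Ico_succ_top hn]
      have h := key n y hy
      have hvp : δ ≤ (f (x n) + g (x n)) - (f y + g y) := by
        have := hvk n hn
        rw [hδ]
        linarith
      have hmul : (β n / M2) * δ ≤ α n * ((f (x n) + g (x n)) - (f y + g y)) :=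
        mul_le_mul (hαlb n) hvp hδ0.le (hαpos n).le
      have hd1 : (2*δ/M2) * (∑ i ∈ Finset.Ico N n, β i + β n)
          = (2*δ/M2) * ∑ i ∈ Finset.Ico N n, β i + 2 * ((β n / M2) * δ) := by ring
      have hd2 : C * (∑ i ∈ Finset.Ico N n, (β i)^2 + (β n)^2)
          = C * ∑ i ∈ Finset.Ico N n, (β i)^2 + C * (β n)^2 := by ring
      rw [hd1, hd2]
      clear_value α δ M2 C
      linarith
  -- contradiction with divergence
  set K1 : ℝ := (‖x N - y‖^2 + C * B) * M2 / (2*δ) with hK1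
  clear_value δ M2 C B K1
  have hsumbd : ∀ n, N ≤ n → ∑ i ∈ Finset.Ico N n, β i ≤ K1 := by
    intro n hn
    have h1 := stage2 n hn
    have h2 : C * ∑ i ∈ Finset.Ico N n, (β i)^2 ≤ C * B :=
      mul_le_mul_of_nonneg_left (hIcoB N n) hC0
    have h3 : 0 ≤ ‖x n - y‖^2 := sq_nonneg _
    have h4 : (2*δ/M2) * ∑ i ∈ Finset.Ico N n, β i ≤ ‖x N - y‖^2 + C * B := by linarith
    rw [hK1, le_div_iff₀ (by linarith : (0:ℝ) < 2*δ)]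
    rw [div_mul_eq_mul_div, div_le_iff₀ hM2pos] at h4
    linarith [h4]
  have hdiv := (hβdiv.eventually_ge_atTop (∑ i ∈ Finset.range N, β i + K1 + 1)).and
    (eventually_ge_atTop N)
  obtain ⟨n, hn1, hn2⟩ := hdiv.exists
  have hsplit : ∑ i ∈ Finset.range N, β i + ∑ i ∈ Finset.Ico N n, β i
      = ∑ i ∈ Finset.range n, β i := by
    rw [Finset.range_eq_Ico, Finset.range_eq_Ico]
    exact Finset.sum_Ico_consecutive β (Nat.zero_le N) hn2
  have := hsumbd n hn2
  linarith
end
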